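/- arXiv:1607.00053 — 4 statements merged into one kernel-verified Lean document; each statement's English description precedes it below -/
import Mathlib

section
/- Let G be a finite k-edge-connected simple graph, let v be a vertex of G, and let v_1, v_2, …, v_k be a sequence of vertices of G, each distinct from v (repetitions among the v_i are allowed). Then there exist k pairwise edge-disjoint paths F_1, F_2, …, F_k in G such that F_i joins v to v_i for each i ∈ {1, …, k}. -/
open SimpleGraph Finset

section Aux
variable {V : Type*} [DecidableEq V]

/-- unit delta function -/
def dlt (x : V) : V → ℤ := fun u => if x = u then 1 else 0

def dout (D : Finset (V × V)) (u : V) : ℕ := (D.filter fun p => p.1 = u).card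
def din (D : Finset (V × V)) (u : V) : ℕ := (D.filter fun p => p.2 = u).card

variable (G : SimpleGraph V)

/-- `D` is an integral flow (set of oriented edges of `G`, no edge used both ways)
with divergence `g`. -/
def IsFlowA (D : Finset (V × V)) (g : V → ℤ) : Prop :=
  (∀ p ∈ D, G.Adj p.1 p.2) ∧ (∀ p ∈ D, Prod.swap p ∉ D) ∧
    (∀ u, (dout D u : ℤ) - din D u = g u)

lemma dout_erase (D : Finset (V × V)) (p : V × V) (hp : p ∈ D) (u : V) :
    (dout (D.erase p) u : ℤ) = dout D u - (if p.1 = u then 1 else 0) := by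
  unfold dout
  rw [Finset.filter_erase]
  by_cases h : p.1 = u
  · rw [Finset.card_erase_of_mem (by simp [hp, h]), if_pos h]
    have : 1 ≤ (D.filter fun q => q.1 = u).card :=
      Finset.card_pos.2 ⟨p, by simp [hp, h]⟩
    push_cast [this]; ring
  · rw [Finset.erase_eq_of_notMem (by simp [h]), if_neg h]; ring

lemma din_erase (D : Finset (V × V)) (p : V × V) (hp : p ∈ D) (u : V) :
    (din (D.erase p) u : ℤ) = din D u - (if p.2 = u then 1 else 0) := by
  unfold din
  rw [Finset.filter_erase]
  by_cases h : p.2 = u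
  · rw [Finset.card_erase_of_mem (by simp [hp, h]), if_pos h]
    have : 1 ≤ (D.filter fun q => q.2 = u).card :=
      Finset.card_pos.2 ⟨p, by simp [hp, h]⟩
    push_cast [this]; ring
  · rw [Finset.erase_eq_of_notMem (by simp [h]), if_neg h]; ring

lemma dout_insert (D : Finset (V × V)) (p : V × V) (hp : p ∉ D) (u : V) :
    (dout (insert p D) u : ℤ) = dout D u + (if p.1 = u then 1 else 0) := by
  unfold dout
  rw [Finset.filter_insert]
  by_cases h : p.1 = u
  · rw [if_pos h, Finset.card_insert_of_notMem (by simp [hp]), if_pos h]; push_cast; ring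
  · rw [if_neg h, if_neg h]; ring

lemma din_insert (D : Finset (V × V)) (p : V × V) (hp : p ∉ D) (u : V) :
    (din (insert p D) u : ℤ) = din D u + (if p.2 = u then 1 else 0) := by
  unfold din
  rw [Finset.filter_insert]
  by_cases h : p.2 = u
  · rw [if_pos h, Finset.card_insert_of_notMem (by simp [hp]), if_pos h]; push_cast; ring
  · rw [if_neg h, if_neg h]; ring

lemma isFlowA_erase {D : Finset (V × V)} {g : V → ℤ} {p : V × V}
    (hf : IsFlowA G D g) (hp : p ∈ D) :
    IsFlowA G (D.erase p) (g - dlt p.1 + dlt p.2) := by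
  obtain ⟨hadj, hanti, hdiv⟩ := hf
  refine ⟨fun q hq => hadj q (Finset.mem_of_mem_erase hq),
    fun q hq h => hanti q (Finset.mem_of_mem_erase hq) (Finset.mem_of_mem_erase h), fun u => ?_⟩
  rw [dout_erase D p hp u, din_erase D p hp u]
  have := hdiv u
  simp only [Pi.add_apply, Pi.sub_apply, dlt]
  split_ifs <;> omega

lemma isFlowA_insert {D : Finset (V × V)} {g : V → ℤ} {p : V × V}
    (hf : IsFlowA G D g) (hp : p ∉ D) (hps : Prod.swap p ∉ D) (hadj' : G.Adj p.1 p.2) :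
    IsFlowA G (insert p D) (g + dlt p.1 - dlt p.2) := by
  obtain ⟨hadj, hanti, hdiv⟩ := hf
  refine ⟨?_, ?_, fun u => ?_⟩
  · intro q hq
    rcases Finset.mem_insert.1 hq with h | h
    · subst h; exact hadj'
    · exact hadj q h
  · intro q hq hswap
    rcases Finset.mem_insert.1 hq with h | h
    · subst h
      rcases Finset.mem_insert.1 hswap with h' | h'
      · exact hadj'.ne (congrArg Prod.fst h'.symm)
      · exact hps h'
    · rcases Finset.mem_insert.1 hswap with h' | h'
      · exact hps (h' ▸ (by simpa [Prod.swap_swap] using h))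
      · exact hanti q h h'
  · rw [dout_insert D p hp u, din_insert D p hp u]
    have := hdiv u
    simp only [Pi.add_apply, Pi.sub_apply, dlt]
    split_ifs <;> omega





lemma sum_dout (D : Finset (V × V)) (R : Finset V) :
    ∑ u ∈ R, dout D u = (D.filter fun p => p.1 ∈ R).card := by
  rw [Finset.card_eq_sum_card_fiberwise (f := Prod.fst) (s := D.filter fun p => p.1 ∈ R)
    (t := R) (fun x hx => (Finset.mem_filter.1 hx).2)]
  apply Finset.sum_congr rfl
  intro b _
  unfold dout
  congr 1
  rw [Finset.filter_filter]
  apply Finset.filter_congr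
  intro x _
  constructor
  · rintro h; exact ⟨h ▸ (by assumption), h⟩
  · exact fun h => h.2

lemma sum_din (D : Finset (V × V)) (R : Finset V) :
    ∑ u ∈ R, din D u = (D.filter fun p => p.2 ∈ R).card := by
  rw [Finset.card_eq_sum_card_fiberwise (f := Prod.snd) (s := D.filter fun p => p.2 ∈ R)
    (t := R) (fun x hx => (Finset.mem_filter.1 hx).2)]
  apply Finset.sum_congr rfl
  intro b _
  unfold din
  congr 1
  rw [Finset.filter_filter]
  apply Finset.filter_congr
  intro x _
  constructor
  · rintro h; exact ⟨h ▸ (by assumption), h⟩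
  · exact fun h => h.2

lemma sum_div_eq_cut (D : Finset (V × V)) (R : Finset V) :
    ∑ u ∈ R, ((dout D u : ℤ) - din D u) =
      ((D.filter fun p => p.1 ∈ R ∧ p.2 ∉ R).card : ℤ)
        - (D.filter fun p => p.1 ∉ R ∧ p.2 ∈ R).card := by
  rw [Finset.sum_sub_distrib]
  have h1 : (D.filter fun p => p.1 ∈ R).card
      = (D.filter fun p => p.1 ∈ R ∧ p.2 ∈ R).card
        + (D.filter fun p => p.1 ∈ R ∧ p.2 ∉ R).card := by
    rw [← Finset.filter_filter, ← Finset.filter_filter,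
      Finset.card_filter_add_card_filter_not]
  have h2 : (D.filter fun p => p.2 ∈ R).card
      = (D.filter fun p => p.2 ∈ R ∧ p.1 ∈ R).card
        + (D.filter fun p => p.2 ∈ R ∧ p.1 ∉ R).card := by
    rw [← Finset.filter_filter, ← Finset.filter_filter,
      Finset.card_filter_add_card_filter_not]
  have h3 : (D.filter fun p => p.2 ∈ R ∧ p.1 ∈ R) = (D.filter fun p => p.1 ∈ R ∧ p.2 ∈ R) := by
    apply Finset.filter_congr; intro x _; exact and_comm
  have h4 : (D.filter fun p => p.2 ∈ R ∧ p.1 ∉ R) = (D.filter fun p => p.1 ∉ R ∧ p.2 ∈ R) := by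
    apply Finset.filter_congr; intro x _; exact and_comm
  rw [← Nat.cast_sum, ← Nat.cast_sum, sum_dout, sum_din, h1, h2, h3, h4]
  push_cast; ring

lemma exists_nodup_chain {α : Type*} {r : α → α → Prop} {a b : α}
    (h : Relation.ReflTransGen r a b) :
    ∃ l : List α, List.Chain r a l ∧ (a :: l).getLast (List.cons_ne_nil _ _) = b
      ∧ (a :: l).Nodup := by
  induction h using Relation.ReflTransGen.head_induction_on with
  | refl => exact ⟨[], List.Chain.nil, rfl, List.nodup_singleton _⟩
  | head hac _ ih =>
    rename_i a c _
    obtain ⟨m, hchain, hlast, hnodup⟩ := ih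
    by_cases ha : a ∈ c :: m
    · obtain ⟨s, t, hst⟩ := List.append_of_mem ha
      have hsuf : (a :: t) <:+ (c :: m) := ⟨s, hst.symm⟩
      refine ⟨t, ?_, ?_, ?_⟩
      · have hch' : List.Chain' r (c :: m) := hchain
        exact hch'.suffix hsuf
      · have h1 : (c :: m).getLast? = some b := by
          rw [List.getLast?_eq_getLast (List.cons_ne_nil _ _), hlast]
        rw [hst] at h1
        rw [List.getLast?_append_of_ne_nil _ (List.cons_ne_nil _ _)] at h1
        rw [List.getLast?_eq_getLast (List.cons_ne_nil _ _)] at h1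
        exact Option.some.inj h1
      · exact hnodup.sublist hsuf.sublist
    · refine ⟨c :: m, List.chain_cons.2 ⟨hac, hchain⟩, ?_, List.nodup_cons.2 ⟨ha, hnodup⟩⟩
      rw [List.getLast_cons (List.cons_ne_nil _ _)]
      exact hlast

lemma aug_chain (D0 : Finset (V × V)) (l : List V) :
    ∀ (c : V) (D : Finset (V × V)) (g : V → ℤ),
    List.Chain (fun a b => G.Adj a b ∧ (a, b) ∉ D0) c l → (c :: l).Nodup →
    IsFlowA G D g → (∀ a b : V, (a ∈ l ∨ b ∈ l) → ((a, b) ∈ D ↔ (a, b) ∈ D0)) →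
    ∃ D', IsFlowA G D' (g + dlt c - dlt ((c :: l).getLast (List.cons_ne_nil _ _))) := by
  induction l with
  | nil =>
    intro c D g _ _ hflow _
    refine ⟨D, ?_⟩
    have hg : g + dlt c - dlt c = g := by ring
    simpa [List.getLast_singleton, hg] using hflow
  | cons b l ih =>
    intro c D g hchain hnodup hflow hagree
    obtain ⟨⟨hadj_cb, hcb0⟩, hchain'⟩ := List.chain_cons.1 hchain
    have hcnb : c ∉ b :: l := (List.nodup_cons.1 hnodup).1
    have hnodup' : (b :: l).Nodup := (List.nodup_cons.1 hnodup).2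
    have hbnl : b ∉ l := (List.nodup_cons.1 hnodup').1
    have hcnl : c ∉ l := fun h => hcnb (List.mem_cons_of_mem _ h)
    have hcbD : (c, b) ∉ D := fun h =>
      hcb0 ((hagree c b (Or.inr (List.mem_cons_self))).1 h)
    have hlast : ((c :: b :: l).getLast (List.cons_ne_nil _ _))
        = ((b :: l).getLast (List.cons_ne_nil _ _)) :=
      List.getLast_cons (List.cons_ne_nil _ _)
    by_cases hbc : (b, c) ∈ D
    · have hflow1 := isFlowA_erase G hflow hbc
      have hagree1 : ∀ a b' : V, (a ∈ l ∨ b' ∈ l) →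
          ((a, b') ∈ D.erase (b, c) ↔ (a, b') ∈ D0) := by
        intro a b' hmem
        have hne : (a, b') ≠ (b, c) := by
          intro h
          obtain ⟨rfl, rfl⟩ := Prod.mk.injEq .. ▸ (Prod.ext_iff.1 h)
          rcases hmem with h | h
          · exact hbnl h
          · exact hcnl h
        rw [Finset.mem_erase]
        simp only [hne, true_and, ne_eq, not_false_eq_true]
        exact hagree a b' (hmem.imp (List.mem_cons_of_mem _) (List.mem_cons_of_mem _))
      obtain ⟨D', hD'⟩ := ih b (D.erase (b, c)) (g - dlt b + dlt c) hchain' hnodup'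
        hflow1 hagree1
      refine ⟨D', ?_⟩
      have hg : g - dlt b + dlt c + dlt b - dlt ((b :: l).getLast (List.cons_ne_nil _ _))
          = g + dlt c - dlt ((b :: l).getLast (List.cons_ne_nil _ _)) := by ring
      rw [hlast, ← hg]
      exact hD'
    · have hflow1 := isFlowA_insert G hflow hcbD (by simpa using hbc) hadj_cb
      have hagree1 : ∀ a b' : V, (a ∈ l ∨ b' ∈ l) →
          ((a, b') ∈ insert (c, b) D ↔ (a, b') ∈ D0) := by
        intro a b' hmem
        have hne : (a, b') ≠ (c, b) := by
          intro h
          obtain ⟨rfl, rfl⟩ := Prod.mk.injEq .. ▸ (Prod.ext_iff.1 h)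
          rcases hmem with h | h
          · exact hcnl h
          · exact hbnl h
        rw [Finset.mem_insert]
        simp only [hne, false_or]
        exact hagree a b' (hmem.imp (List.mem_cons_of_mem _) (List.mem_cons_of_mem _))
      obtain ⟨D', hD'⟩ := ih b (insert (c, b) D) (g + dlt c - dlt b) hchain' hnodup'
        hflow1 hagree1
      refine ⟨D', ?_⟩
      have hg : g + dlt c - dlt b + dlt b - dlt ((b :: l).getLast (List.cons_ne_nil _ _))
          = g + dlt c - dlt ((b :: l).getLast (List.cons_ne_nil _ _)) := by ring
      rw [hlast, ← hg]
      exact hD'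

lemma reach_all [Fintype V] {k : ℕ}
    (hG2 : ∀ S : Set (Sym2 V), S.ncard < k → (G.deleteEdges S).Connected)
    {D : Finset (V × V)} {g : V → ℤ} (hf : IsFlowA G D g) {v : V} {m : ℕ} (hmk : m < k)
    (hg : ∀ u, g u ≤ if u = v then (m : ℤ) else 0) (t : V) :
    Relation.ReflTransGen (fun a b => G.Adj a b ∧ (a, b) ∉ D) v t := by
  classical
  set Res : V → V → Prop := fun a b => G.Adj a b ∧ (a, b) ∉ D with hRes
  set R : Finset V := Finset.univ.filter (fun u => Relation.ReflTransGen Res v u) with hR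
  have hvR : v ∈ R := by simp [hR, Relation.ReflTransGen.refl]
  have hclosed : ∀ a b : V, a ∈ R → Res a b → b ∈ R := by
    intro a b haR hab
    simp only [hR, Finset.mem_filter, Finset.mem_univ, true_and] at haR ⊢
    exact haR.tail hab
  obtain ⟨hadj, hanti, hdiv⟩ := hf
  have hcutin : (D.filter fun p => p.1 ∉ R ∧ p.2 ∈ R) = ∅ := by
    rw [Finset.filter_eq_empty_iff]
    rintro ⟨a, b⟩ hab ⟨haR, hbR⟩
    exact haR (hclosed b a hbR ⟨(hadj _ hab).symm, fun h => hanti _ hab h⟩)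
  have hcut : (((D.filter fun p => p.1 ∈ R ∧ p.2 ∉ R).card : ℤ)) = ∑ u ∈ R, g u := by
    have h := sum_div_eq_cut D R
    rw [hcutin] at h
    simp only [Finset.card_empty, Nat.cast_zero, sub_zero] at h
    rw [← h]
    exact Finset.sum_congr rfl (fun u _ => hdiv u)
  have hsum : ∑ u ∈ R, g u ≤ m := by
    calc ∑ u ∈ R, g u ≤ ∑ u ∈ R, (if u = v then (m : ℤ) else 0) :=
          Finset.sum_le_sum (fun u _ => hg u)
      _ = if v ∈ R then (m : ℤ) else 0 := by rw [Finset.sum_ite_eq' R v (fun _ => (m : ℤ))]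
      _ = m := by rw [if_pos hvR]
  have hcutcard : (D.filter fun p => p.1 ∈ R ∧ p.2 ∉ R).card < k := by
    have := hcut.trans_le hsum
    exact_mod_cast lt_of_le_of_lt (by exact_mod_cast this) hmk
  set S : Set (Sym2 V) :=
    ↑((D.filter fun p => p.1 ∈ R ∧ p.2 ∉ R).image fun p => s(p.1, p.2)) with hS
  have hScard : S.ncard < k := by
    rw [hS, Set.ncard_coe_finset]
    exact lt_of_le_of_lt Finset.card_image_le hcutcard
  have hconn := hG2 S hScard
  have hreach : (G.deleteEdges S).Reachable v t := hconn.preconnected v t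
  have hwalk : ∀ {x y : V}, (G.deleteEdges S).Walk x y → x ∈ R → y ∈ R := by
    intro x y w
    induction w with
    | nil => exact id
    | @cons a b c h p ih =>
      intro haR
      apply ih
      rw [SimpleGraph.deleteEdges_adj] at h
      by_cases hres : Res a b
      · exact hclosed a b haR hres
      · have habD : (a, b) ∈ D := by
          by_contra hD
          exact hres ⟨h.1, hD⟩
        by_cases hbR : b ∈ R
        · exact hbR
        · exact absurd (by
            rw [hS]
            simp only [Finset.coe_image, Set.mem_image, Finset.mem_coe, Finset.mem_filter]
            exact ⟨(a, b), ⟨habD, haR, hbR⟩, rfl⟩) h.2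
  have := hwalk hreach.some hvR
  simpa [hR] using this

lemma sum_count_univ [Fintype V] (L : List V) : ∑ u, L.count u = L.length := by
  induction L with
  | nil => simp
  | cons a L ih =>
    simp only [List.count_cons, List.length_cons]
    rw [Finset.sum_add_distrib, ih]
    simp [Finset.sum_ite_eq' Finset.univ a (fun _ => 1)]

lemma reach_demand [Fintype V] {D : Finset (V × V)} {L : List V} {v : V}
    (hf : IsFlowA G D (fun u => (if u = v then (L.length : ℤ) else 0) - L.count u))
    {t : V} (ht : t ∈ L) :
    Relation.ReflTransGen (fun a b => (a, b) ∈ D) v t := by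
  classical
  set Res : V → V → Prop := fun a b => (a, b) ∈ D with hRes
  set R : Finset V := Finset.univ.filter (fun u => Relation.ReflTransGen Res v u) with hR
  have hvR : v ∈ R := by simp [hR, Relation.ReflTransGen.refl]
  have hclosed : ∀ a b : V, a ∈ R → Res a b → b ∈ R := by
    intro a b haR hab
    simp only [hR, Finset.mem_filter, Finset.mem_univ, true_and] at haR ⊢
    exact haR.tail hab
  by_contra htR'
  have htR : t ∉ R := by simpa [hR] using htR'
  obtain ⟨hadj, hanti, hdiv⟩ := hf
  have hcutout : (D.filter fun p => p.1 ∈ R ∧ p.2 ∉ R) = ∅ := by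
    rw [Finset.filter_eq_empty_iff]
    rintro ⟨a, b⟩ hab ⟨haR, hbR⟩
    exact hbR (hclosed a b haR hab)
  have hsum0 : ∑ u ∈ R, ((if u = v then (L.length : ℤ) else 0) - L.count u) ≤ 0 := by
    have h := sum_div_eq_cut D R
    rw [hcutout] at h
    simp only [Finset.card_empty, Nat.cast_zero, zero_sub] at h
    have h2 : ∑ u ∈ R, ((if u = v then (L.length : ℤ) else 0) - L.count u)
        = -((D.filter fun p => p.1 ∉ R ∧ p.2 ∈ R).card : ℤ) := by
      rw [← h]
      exact (Finset.sum_congr rfl (fun u _ => hdiv u)).symm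
    rw [h2]
    simp
  have hcount : ∑ u ∈ R, (L.count u : ℤ) ≤ (L.length : ℤ) - L.count t := by
    have hsub : R ⊆ Finset.univ.erase t := by
      intro u hu
      exact Finset.mem_erase.2 ⟨fun h => htR (h ▸ hu), Finset.mem_univ u⟩
    have h1 : ∑ u ∈ R, (L.count u : ℤ) ≤ ∑ u ∈ Finset.univ.erase t, (L.count u : ℤ) :=
      Finset.sum_le_sum_of_subset_of_nonneg hsub (fun _ _ _ => by positivity)
    have h2 : (L.count t : ℤ) + ∑ u ∈ Finset.univ.erase t, (L.count u : ℤ)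
        = (L.length : ℤ) := by
      rw [Finset.add_sum_erase Finset.univ (fun u => (L.count u : ℤ)) (Finset.mem_univ t)]
      exact_mod_cast congrArg (Nat.cast : ℕ → ℤ) (sum_count_univ L)
    omega
  have hbig : (0 : ℤ) < ∑ u ∈ R, ((if u = v then (L.length : ℤ) else 0) - L.count u) := by
    rw [Finset.sum_sub_distrib]
    have h3 : ∑ u ∈ R, (if u = v then (L.length : ℤ) else 0) = L.length := by
      rw [Finset.sum_ite_eq' R v (fun _ => (L.length : ℤ)), if_pos hvR]
    rw [h3]
    have hct : 1 ≤ (L.count t : ℤ) := by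
      exact_mod_cast List.count_pos_iff.2 ht
    omega
  omega

lemma extract_chain (D0 : Finset (V × V)) (l : List V) :
    ∀ (c : V) (D : Finset (V × V)) (g : V → ℤ) (t : V),
    List.Chain (fun a b => (a, b) ∈ D0) c l → (c :: l).Nodup →
    IsFlowA G D g → (∀ a b : V, (a ∈ l ∨ b ∈ l) → ((a, b) ∈ D ↔ (a, b) ∈ D0)) →
    (c :: l).getLast (List.cons_ne_nil _ _) = t →
    ∃ (p : G.Walk c t) (D' : Finset (V × V)),
      IsFlowA G D' (g - dlt c + dlt t) ∧ D' ⊆ D ∧ p.support = c :: l ∧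
      (∀ d ∈ p.darts, d.toProd ∈ D ∧ d.toProd ∉ D') := by
  induction l with
  | nil =>
    intro c D g t _ _ hflow _ hlast
    have : c = t := by simpa using hlast
    subst this
    refine ⟨SimpleGraph.Walk.nil, D, ?_, Finset.Subset.refl D, by simp, by simp⟩
    have hg : g - dlt c + dlt c = g := by ring
    rw [hg]
    exact hflow
  | cons b l ih =>
    intro c D g t hchain hnodup hflow hagree hlast
    obtain ⟨hcb0, hchain'⟩ := List.chain_cons.1 hchain
    have hcnb : c ∉ b :: l := (List.nodup_cons.1 hnodup).1
    have hnodup' : (b :: l).Nodup := (List.nodup_cons.1 hnodup).2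
    have hbnl : b ∉ l := (List.nodup_cons.1 hnodup').1
    have hcnl : c ∉ l := fun h => hcnb (List.mem_cons_of_mem _ h)
    have hcbD : (c, b) ∈ D := (hagree c b (Or.inr (List.mem_cons_self))).2 hcb0
    have hadj_cb : G.Adj c b := hflow.1 _ hcbD
    have hflow1 := isFlowA_erase G hflow hcbD
    have hagree1 : ∀ a b' : V, (a ∈ l ∨ b' ∈ l) →
        ((a, b') ∈ D.erase (c, b) ↔ (a, b') ∈ D0) := by
      intro a b' hmem
      have hne : (a, b') ≠ (c, b) := by
        intro h
        obtain ⟨rfl, rfl⟩ := Prod.mk.injEq .. ▸ (Prod.ext_iff.1 h)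
        rcases hmem with h | h
        · exact hcnl h
        · exact hbnl h
      rw [Finset.mem_erase]
      simp only [hne, true_and, ne_eq, not_false_eq_true]
      exact hagree a b' (hmem.imp (List.mem_cons_of_mem _) (List.mem_cons_of_mem _))
    have hlast' : (b :: l).getLast (List.cons_ne_nil _ _) = t := by
      rw [← hlast, List.getLast_cons (List.cons_ne_nil _ _)]
    obtain ⟨p', D', hflow', hsub', hsupp', hdarts'⟩ :=
      ih b (D.erase (c, b)) (g - dlt c + dlt b) t hchain' hnodup' hflow1 hagree1 hlast'
    refine ⟨SimpleGraph.Walk.cons hadj_cb p', D', ?_, ?_, ?_, ?_⟩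
    · have hg : g - dlt c + dlt b - dlt b + dlt t = g - dlt c + dlt t := by ring
      rw [← hg]
      exact hflow'
    · exact hsub'.trans (Finset.erase_subset _ _)
    · rw [SimpleGraph.Walk.support_cons, hsupp']
    · intro d hd
      rw [SimpleGraph.Walk.darts_cons, List.mem_cons] at hd
      rcases hd with h | h
      · subst h
        refine ⟨hcbD, fun hmem => ?_⟩
        have := hsub' hmem
        simp at this
      · exact ⟨Finset.mem_of_mem_erase ((hdarts' d h).1), (hdarts' d h).2⟩

lemma decompose [Fintype V] (v : V) : ∀ (L : List V) (D : Finset (V × V)),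
    (∀ u ∈ L, u ≠ v) →
    IsFlowA G D (fun u => (if u = v then (L.length : ℤ) else 0) - L.count u) →
    ∃ p : (i : Fin L.length) → G.Walk v (L.get i),
      (∀ i, (p i).IsPath) ∧
      (∀ i, ∀ d ∈ (p i).darts, d.toProd ∈ D) ∧
      (∀ i j, i ≠ j → ∀ e ∈ (p i).edges, e ∉ (p j).edges) := by
  intro L
  induction L with
  | nil =>
    intro D _ _
    exact ⟨fun i => i.elim0, fun i => i.elim0, fun i => i.elim0, fun i => i.elim0⟩
  | cons a L ih =>
    intro D hL hflow
    have hav : a ≠ v := hL a (List.mem_cons_self)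
    have hreach := reach_demand G hflow (List.mem_cons_self)
    obtain ⟨l, hchain, hlast, hnodup⟩ := exists_nodup_chain hreach
    obtain ⟨p0, D', hflow', hsub', hsupp', hdarts'⟩ :=
      extract_chain G D l v D _ a hchain hnodup hflow
        (fun _ _ _ => Iff.rfl) hlast
    have hpath0 : p0.IsPath := by
      rw [SimpleGraph.Walk.isPath_def, hsupp']
      exact hnodup
    have hg' : (fun u => (if u = v then ((a :: L).length : ℤ) else 0) - (a :: L).count u)
        - dlt v + dlt a
        = fun u => (if u = v then (L.length : ℤ) else 0) - L.count u := by
      funext u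
      simp only [Pi.add_apply, Pi.sub_apply, dlt, List.count_cons, List.length_cons,
        beq_iff_eq]
      push_cast
      by_cases h1 : u = v
      · simp only [h1, hav, if_true, if_false, ite_true, ite_false, if_neg hav]
        ring
      · by_cases h2 : a = u <;> simp [h1, h2, Ne.symm h1] <;> ring
    rw [hg'] at hflow'
    obtain ⟨q, hqpath, hqD, hqdisj⟩ := ih D' (fun u hu => hL u (List.mem_cons_of_mem _ hu))
      hflow'
    refine ⟨fun i => Fin.cases p0 (fun j => q j) i, ?_, ?_, ?_⟩
    · intro i
      refine Fin.cases ?_ ?_ i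
      · exact hpath0
      · exact fun j => hqpath j
    · intro i
      refine Fin.cases ?_ ?_ i
      · exact fun d hd => (hdarts' d hd).1
      · exact fun j d hd => hsub' (hqD j d hd)
    · -- edge disjointness
      have key : ∀ (j : Fin L.length) (e : Sym2 V), e ∈ p0.edges → e ∉ (q j).edges := by
        intro j e he0 heq
        rw [SimpleGraph.Walk.edges, List.mem_map] at he0 heq
        obtain ⟨d, hd, rfl⟩ := he0
        obtain ⟨d', hd', hee⟩ := heq
        have h1 : d.toProd ∈ D ∧ d.toProd ∉ D' := hdarts' d hd
        have h2 : d'.toProd ∈ D' := hqD j d' hd'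
        have : s(d'.toProd.1, d'.toProd.2) = s(d.toProd.1, d.toProd.2) := hee
        rcases Sym2.mk_eq_mk_iff.1 this with h | h
        · exact h1.2 (h ▸ h2)
        · -- d'.toProd = swap of d.toProd
          have hswap : Prod.swap d.toProd ∈ D := hsub' (h ▸ h2)
          exact hflow.2.1 _ h1.1 hswap
      intro i j hij
      induction i using Fin.cases with
      | zero =>
        induction j using Fin.cases with
        | zero => exact absurd rfl hij
        | succ j' =>
          exact key j'
      | succ i' =>
        induction j using Fin.cases with
        | zero =>
          simp only [Fin.cases_zero, Fin.cases_succ]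
          exact fun e he hee => key i' e hee he
        | succ j' =>
          have hne : i' ≠ j' := fun h => hij (congrArg Fin.succ h)
          exact hqdisj i' j' hne

end Aux

open SimpleGraph

/-- A graph is `k`-edge-connected if it is connected and stays connected after
deleting any set of fewer than `k` edges. -/
def KEdgeConnected {V : Type*} (G : SimpleGraph V) (k : ℕ) : Prop :=
  G.Connected ∧ ∀ S : Set (Sym2 V), S.ncard < k → (G.deleteEdges S).Connected

/-- In a `k`-edge-connected graph, for every vertex `v` and every sequence
`v_1, …, v_k` of vertices distinct from `v` there is a `v`-`(v_1, …, v_k)`-fan: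
`k` pairwise edge-disjoint paths, the `i`-th joining `v` to `v_i`. -/
theorem kEdgeConnected_fan {V : Type*} [Fintype V] (G : SimpleGraph V) (k : ℕ)
    (hG : KEdgeConnected G k) (v : V) (f : Fin k → V) (hf : ∀ i, f i ≠ v) :
    ∃ p : (i : Fin k) → G.Walk v (f i),
      (∀ i, (p i).IsPath) ∧
      (∀ i j, i ≠ j → ∀ e, e ∈ (p i).edges → e ∉ (p j).edges) := by
  classical
  obtain ⟨hconn, hdel⟩ := hG
  set L : List V := List.ofFn f with hL
  have hlen : L.length = k := List.length_ofFn
  -- build flows by induction on the number of targets served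
  have key : ∀ m : ℕ, m ≤ k →
      ∃ D, IsFlowA G D (fun u => (if u = v then (m : ℤ) else 0) - (L.take m).count u) := by
    intro m
    induction m with
    | zero =>
      intro _
      refine ⟨∅, fun p hp => absurd hp (Finset.notMem_empty p),
        fun p hp => absurd hp (Finset.notMem_empty p), fun u => ?_⟩
      simp [dout, din]
    | succ m ihm =>
      intro hm1
      have hm : m < k := Nat.lt_of_succ_le hm1
      obtain ⟨D, hflow⟩ := ihm (Nat.le_of_lt hm)
      set t : V := f ⟨m, hm⟩ with ht
      have hg : ∀ u, ((if u = v then (m : ℤ) else 0) - (L.take m).count u)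
          ≤ if u = v then (m : ℤ) else 0 := by
        intro u
        have : (0 : ℤ) ≤ (L.take m).count u := by positivity
        omega
      have hreach := reach_all G hdel hflow hm hg t
      obtain ⟨l, hchain, hlast, hnodup⟩ := exists_nodup_chain hreach
      obtain ⟨D', hflow'⟩ := aug_chain G D l v D _ hchain hnodup hflow
        (fun _ _ _ => Iff.rfl)
      rw [hlast] at hflow'
      refine ⟨D', ?_⟩
      have htake : L.take (m + 1) = L.take m ++ [t] := by
        rw [List.take_succ]
        congr
        rw [hL, List.getElem?_ofFn]
        simp [List.ofFnNthVal, hm, ht]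
      have hgeq : (fun u => (if u = v then (m : ℤ) else 0) - (L.take m).count u)
          + dlt v - dlt t
          = fun u => (if u = v then ((m + 1 : ℕ) : ℤ) else 0) - (L.take (m + 1)).count u := by
        funext u
        simp only [Pi.add_apply, Pi.sub_apply, dlt, htake, List.count_append,
          List.count_singleton, beq_iff_eq]
        push_cast
        have h2 : t ≠ v := ht ▸ hf ⟨m, hm⟩
        by_cases h1 : u = v
        · simp only [h1, h2, Ne.symm h2, if_true, if_false, ite_true, ite_false,
            if_neg (Ne.symm h2), if_neg h2]
          ring
        · by_cases h3 : t = u <;> simp [h1, h3, Ne.symm h1] <;> ring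
      rw [← hgeq]
      exact hflow'
  obtain ⟨D, hflow⟩ := key k le_rfl
  have htk : L.take k = L := List.take_of_length_le (le_of_eq hlen)
  have hflow2 : IsFlowA G D (fun u => (if u = v then (L.length : ℤ) else 0) - L.count u) := by
    rw [htk] at hflow
    rw [hlen]
    exact hflow
  have hLv : ∀ u ∈ L, u ≠ v := by
    intro u hu
    rw [hL, List.mem_ofFn] at hu
    obtain ⟨i, rfl⟩ := hu
    exact hf i
  obtain ⟨p', hpath', hdarts', hdisj'⟩ := decompose G v L D hLv hflow2
  -- re-index and convert to paths
  have hget : ∀ i : Fin k, L.get (Fin.cast hlen.symm i) = f i := by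
    intro i
    show (List.ofFn f).get (Fin.cast hlen.symm i) = f i
    rw [List.get_ofFn]
    congr 1
  refine ⟨fun i => ((p' (Fin.cast hlen.symm i)).copy rfl (hget i)).bypass, ?_, ?_⟩
  · intro i
    exact SimpleGraph.Walk.bypass_isPath _
  · intro i j hij e hei hej
    have hij' : (Fin.cast hlen.symm i) ≠ (Fin.cast hlen.symm j) := by
      intro h
      apply hij
      ext
      simpa using congrArg (fun x : Fin L.length => (x : ℕ)) h
    have h1 : e ∈ (p' (Fin.cast hlen.symm i)).edges := by
      have := SimpleGraph.Walk.edges_bypass_subset _ hei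
      rwa [SimpleGraph.Walk.edges_copy] at this
    have h2 : e ∈ (p' (Fin.cast hlen.symm j)).edges := by
      have := SimpleGraph.Walk.edges_bypass_subset _ hej
      rwa [SimpleGraph.Walk.edges_copy] at this
    exact hdisj' _ _ hij' e h1 h2
end

section
/- Let T be a finite tree, let k ≥ 1 be an integer, and let B be a subset of the vertex set of T with |B| ≥ k and |B| ≡ k (mod 2). Then the vertex set of T can be partitioned into k pairwise disjoint nonempty subsets V_1, V_2, …, V_k such that each V_i contains an odd number of vertices from B and each V_i induces a connected subgraph (subtree) of T. -/
open SimpleGraph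

namespace TreePartitionAux

variable {V : Type*} [DecidableEq V] {T : SimpleGraph V}

/-- The unique path between two vertices of a tree. -/
noncomputable def thePath (hT : T.IsTree) (x y : V) : T.Walk x y :=
  ((hT.existsUnique_path x y).exists).choose

lemma thePath_isPath (hT : T.IsTree) (x y : V) : (thePath hT x y).IsPath :=
  ((hT.existsUnique_path x y).exists).choose_spec

lemma thePath_unique (hT : T.IsTree) {x y : V} {p : T.Walk x y} (hp : p.IsPath) :
    p = thePath hT x y :=
  (hT.existsUnique_path x y).unique hp (thePath_isPath hT x y)

lemma length_thePath (hT : T.IsTree) (x y : V) :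
    (thePath hT x y).length = T.dist x y := by
  obtain ⟨w, hw⟩ := hT.isConnected.exists_walk_length_eq_dist x y
  have h1 : T.dist x y ≤ (thePath hT x y).length := SimpleGraph.dist_le _
  have h2 : w.bypass = thePath hT x y := thePath_unique hT w.bypass_isPath
  have h3 := Walk.length_bypass_le w
  have h4 := congrArg Walk.length h2
  omega

lemma one_le_dist (hT : T.IsTree) {x y : V} (h : x ≠ y) : 1 ≤ T.dist x y := by
  rcases Nat.eq_zero_or_pos (T.dist x y) with h0 | h0
  · exact absurd (Walk.eq_of_length_eq_zero ((length_thePath hT x y).trans h0)) h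
  · exact h0

lemma dist_add_of_mem_support (hT : T.IsTree) {x y v : V}
    (h : v ∈ (thePath hT x y).support) :
    T.dist x y = T.dist x v + T.dist v y := by
  set p := thePath hT x y with hp
  have hpath := thePath_isPath hT x y
  have h1 : ((p.takeUntil v h).append (p.dropUntil v h)) = p := p.take_spec h
  have h2 : (p.takeUntil v h).IsPath := hpath.takeUntil h
  have h3 : (p.dropUntil v h).IsPath := hpath.dropUntil h
  have e2 : p.takeUntil v h = thePath hT x v := thePath_unique hT h2
  have e3 : p.dropUntil v h = thePath hT v y := thePath_unique hT h3
  have := congrArg Walk.length h1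
  rw [Walk.length_append, e2, e3, length_thePath, length_thePath, length_thePath] at this
  omega

lemma support_thePath_subset (hT : T.IsTree) {S : Set V} (hS : (T.induce S).Connected)
    {x y : V} (hx : x ∈ S) (hy : y ∈ S) :
    ∀ z ∈ (thePath hT x y).support, z ∈ S := by
  obtain ⟨w⟩ := hS ⟨x, hx⟩ ⟨y, hy⟩
  let w' : T.Walk x y := w.map (SimpleGraph.Embedding.induce S).toHom
  have hb : w'.bypass = thePath hT x y := thePath_unique hT w'.bypass_isPath
  intro z hz
  rw [← hb] at hz
  have hz' := Walk.support_bypass_subset w' hz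
  have : z ∈ w.support.map (fun a : S => (a : V)) := by
    have h' : z ∈ (w.map (SimpleGraph.Embedding.induce S).toHom).support := hz'
    rw [Walk.support_map] at h'
    exact h'
  obtain ⟨⟨z', hz''⟩, -, rfl⟩ := List.mem_map.mp this
  exact hz''

lemma reachable_induce_of_walk {A : Set V} :
    ∀ {a b : V} (w : T.Walk a b), (∀ x ∈ w.support, x ∈ A) →
      ∀ (ha : a ∈ A) (hb : b ∈ A), (T.induce A).Reachable ⟨a, ha⟩ ⟨b, hb⟩ := by
  intro a b w
  induction w with
  | nil => intro _ ha hb; rfl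
  | @cons a c b h p ih =>
    intro hw ha hb
    have hc : c ∈ A := hw c (by simp)
    have hadj : (T.induce A).Adj ⟨a, ha⟩ ⟨c, hc⟩ := h
    exact hadj.reachable.trans (ih (fun x hx => hw x (by simp [hx])) hc hb)

lemma induce_connected_of_connSet {A : Set V} (hne : A.Nonempty)
    (h : ∀ a ∈ A, ∀ b ∈ A, ∃ w : T.Walk a b, ∀ x ∈ w.support, x ∈ A) :
    (T.induce A).Connected := by
  rw [connected_iff]
  refine ⟨?_, hne.to_subtype⟩
  rintro ⟨a, ha⟩ ⟨b, hb⟩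
  obtain ⟨w, hw⟩ := h a ha b hb
  exact reachable_induce_of_walk w hw ha hb

/-- The key splitting step: a connected set `S` carrying at least two `B`-vertices can be
split into `A` (with exactly one `B`-vertex) and `C`, both connected. -/
lemma split [Fintype V] (hT : T.IsTree) {S : Set V} (hS : (T.induce S).Connected)
    {B : Set V} (hB2 : 2 ≤ (B ∩ S).ncard) :
    ∃ v ∈ B ∩ S, ∃ A C : Set V, A ∪ C = S ∧ Disjoint A C ∧ v ∈ A ∧
      B ∩ A = {v} ∧ B ∩ C = (B ∩ S) \ {v} ∧ C.Nonempty ∧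
      (T.induce A).Connected ∧ (T.induce C).Connected := by
  classical
  have hfin : (B ∩ S).Finite := Set.toFinite _
  have hne : (B ∩ S).Nonempty := by
    rcases Set.eq_empty_or_nonempty (B ∩ S) with h | h
    · rw [h] at hB2; simp at hB2
    · exact h
  obtain ⟨r, hr⟩ := id hne
  obtain ⟨v, hv, hvmax⟩ := Set.exists_max_image (B ∩ S) (T.dist r) hfin hne
  have hrS : r ∈ S := hr.2
  have hvS : v ∈ S := hv.2
  -- v ≠ r
  obtain ⟨b0, hb0, hb0r⟩ := Set.exists_ne_of_one_lt_ncard (s := B ∩ S) (by omega) r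
  have hvr : v ≠ r := by
    intro h
    have h1 : 1 ≤ T.dist r b0 := one_le_dist hT (fun h' => hb0r h'.symm)
    have h2 := hvmax b0 hb0
    rw [h, SimpleGraph.dist_self] at h2
    omega
  -- the two pieces
  set A : Set V := {u | u ∈ S ∧ v ∈ (thePath hT r u).support} with hA
  set C : Set V := {u | u ∈ S ∧ v ∉ (thePath hT r u).support} with hC
  have hvA : v ∈ A := ⟨hvS, Walk.end_mem_support _⟩
  have hrC : r ∈ C := by
    refine ⟨hrS, ?_⟩
    have : (Walk.nil : T.Walk r r) = thePath hT r r := thePath_unique hT Walk.IsPath.nil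
    rw [← this]
    simpa using hvr
  -- every B-vertex of A equals v
  have hBAv : ∀ b ∈ B ∩ S, b ∈ A → b = v := by
    rintro b ⟨hbB, hbS⟩ ⟨-, hmem⟩
    by_contra hbv
    have hd : T.dist r b = T.dist r v + T.dist v b := dist_add_of_mem_support hT hmem
    have h1 : 1 ≤ T.dist v b := one_le_dist hT (fun h => hbv h.symm)
    have h2 := hvmax b ⟨hbB, hbS⟩
    omega
  -- support of paths from r inside C stays in C
  have hCpath : ∀ u ∈ C, ∀ w ∈ (thePath hT r u).support, w ∈ C := by
    rintro u ⟨huS, hunv⟩ w hw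
    have hwS : w ∈ S := support_thePath_subset hT hS hrS huS w hw
    refine ⟨hwS, ?_⟩
    set p := thePath hT r u
    have hpre : (p.takeUntil w hw) = thePath hT r w :=
      thePath_unique hT ((thePath_isPath hT r u).takeUntil hw)
    rw [← hpre]
    intro hvmem
    exact hunv (Walk.support_takeUntil_subset p hw hvmem)
  -- support of the "drop" part of paths into A stays in A
  have hApath : ∀ u (hu : u ∈ A),
      ∀ w ∈ ((thePath hT r u).dropUntil v hu.2).support, w ∈ A := by
    rintro u hu w hw
    set p := thePath hT r u with hp
    have hmem : v ∈ p.support := hu.2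
    have hwp : w ∈ p.support := Walk.support_dropUntil_subset p hmem hw
    have hwS : w ∈ S := support_thePath_subset hT hS hrS hu.1 w hwp
    refine ⟨hwS, ?_⟩
    -- the path from r to w is (takeUntil v) ++ ((dropUntil v).takeUntil w)
    set q1 := p.takeUntil v hmem with hq1
    set q2 := p.dropUntil v hmem with hq2
    have hsplit : q1.append q2 = p := p.take_spec hmem
    have hsplit2 : (q2.takeUntil w hw).append (q2.dropUntil w hw) = q2 := q2.take_spec hw
    have hfull : (q1.append (q2.takeUntil w hw)).append (q2.dropUntil w hw) = p := by
      rw [← Walk.append_assoc, hsplit2, hsplit]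
    have hpath : (q1.append (q2.takeUntil w hw)).IsPath := by
      have : ((q1.append (q2.takeUntil w hw)).append (q2.dropUntil w hw)).IsPath := by
        rw [hfull]; exact thePath_isPath hT r u
      exact this.of_append_left
    have heq : q1.append (q2.takeUntil w hw) = thePath hT r w := thePath_unique hT hpath
    rw [← heq, Walk.mem_support_append_iff]
    exact Or.inl (Walk.end_mem_support q1)
  -- connectivity of C
  have hconC : C.Nonempty → (T.induce C).Connected := by
    intro hCne
    refine induce_connected_of_connSet hCne ?_
    intro a ha b hb
    refine ⟨(thePath hT r a).reverse.append (thePath hT r b), ?_⟩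
    intro x hx
    rw [Walk.mem_support_append_iff, Walk.support_reverse, List.mem_reverse] at hx
    rcases hx with hx | hx
    · exact hCpath a ha x hx
    · exact hCpath b hb x hx
  -- connectivity of A
  have hconA : (T.induce A).Connected := by
    refine induce_connected_of_connSet ⟨v, hvA⟩ ?_
    intro a ha b hb
    refine ⟨((thePath hT r a).dropUntil v ha.2).reverse.append
      ((thePath hT r b).dropUntil v hb.2), ?_⟩
    intro x hx
    rw [Walk.mem_support_append_iff, Walk.support_reverse, List.mem_reverse] at hx
    rcases hx with hx | hx
    · exact hApath a ha x hx
    · exact hApath b hb x hx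
  refine ⟨v, hv, A, C, ?_, ?_, hvA, ?_, ?_, ⟨r, hrC⟩, hconA, hconC ⟨r, hrC⟩⟩
  · ext x
    constructor
    · rintro (⟨h, -⟩ | ⟨h, -⟩) <;> exact h
    · intro hx
      by_cases h : v ∈ (thePath hT r x).support
      · exact Or.inl ⟨hx, h⟩
      · exact Or.inr ⟨hx, h⟩
  · rw [Set.disjoint_left]
    rintro x ⟨-, hx⟩ ⟨-, hx'⟩
    exact hx' hx
  · ext b
    constructor
    · rintro ⟨hbB, hbA⟩
      exact hBAv b ⟨hbB, hbA.1⟩ hbA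
    · rintro rfl
      exact ⟨hv.1, hvA⟩
  · ext b
    constructor
    · rintro ⟨hbB, hbC⟩
      refine ⟨⟨hbB, hbC.1⟩, ?_⟩
      rintro rfl
      exact hbC.2 (Walk.end_mem_support _)
    · rintro ⟨⟨hbB, hbS⟩, hbv⟩
      refine ⟨hbB, hbS, ?_⟩
      intro hmem
      exact (hbv (hBAv b ⟨hbB, hbS⟩ ⟨hbS, hmem⟩))

lemma aux [Fintype V] (hT : T.IsTree) (B : Set V) :
    ∀ n : ℕ, ∀ S : Set V, (T.induce S).Connected →
      n + 1 ≤ (B ∩ S).ncard → (B ∩ S).ncard % 2 = (n + 1) % 2 →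
      ∃ P : Fin (n + 1) → Set V,
        (∀ i, (P i).Nonempty) ∧ (∀ i j, i ≠ j → Disjoint (P i) (P j)) ∧
        (⋃ i, P i) = S ∧ (∀ i, Odd (B ∩ P i).ncard) ∧
        (∀ i, (T.induce (P i)).Connected) := by
  intro n
  induction n with
  | zero =>
    intro S hS h1 h2
    refine ⟨fun _ => S, fun _ => ?_, ?_, ?_, fun _ => ?_, fun _ => hS⟩
    · exact Set.nonempty_coe_sort.mp hS.nonempty
    · intro i j hij
      exact absurd ((Fin.fin_one_eq_zero i).trans (Fin.fin_one_eq_zero j).symm) hij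
    · exact Set.iUnion_const S
    · show Odd (B ∩ S).ncard
      rw [Nat.odd_iff]; omega
  | succ n ih =>
    intro S hS h1 h2
    have h2' : 2 ≤ (B ∩ S).ncard := by omega
    obtain ⟨v, hv, A, C, hAC, hdisj, hvA, hBA, hBC, hCne, hconA, hconC⟩ := split hT hS h2'
    have hCcard : (B ∩ C).ncard = (B ∩ S).ncard - 1 := by
      rw [hBC, Set.ncard_diff_singleton_of_mem hv]
    obtain ⟨P', hne', hdisj', hun', hodd', hcon'⟩ :=
      ih C hconC (by omega) (by omega)
    have hsub : ∀ j, P' j ⊆ C := fun j => hun' ▸ Set.subset_iUnion P' j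
    refine ⟨Fin.cons A P', ?_, ?_, ?_, ?_, ?_⟩
    · intro i
      refine Fin.cases ?_ ?_ i
      · exact ⟨v, hvA⟩
      · intro j; simpa using hne' j
    · intro i j
      refine Fin.cases ?_ ?_ i
      · refine Fin.cases ?_ ?_ j
        · intro h; exact absurd rfl h
        · intro j' _h
          simpa using hdisj.mono_right (hsub j')
      · intro i'
        refine Fin.cases ?_ ?_ j
        · intro _h
          simpa using (hdisj.mono_right (hsub i')).symm
        · intro j' h
          have hne2 : i' ≠ j' := fun he => h (by rw [he])
          simpa using hdisj' i' j' hne2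
    · ext x
      constructor
      · intro hx
        rw [Set.mem_iUnion] at hx
        obtain ⟨i, hi⟩ := hx
        rw [← hAC]
        rcases Fin.eq_zero_or_eq_succ i with rfl | ⟨j, rfl⟩
        · exact Or.inl (by simpa using hi)
        · exact Or.inr (hsub j (by simpa using hi))
      · intro hx
        rw [← hAC] at hx
        rw [Set.mem_iUnion]
        rcases hx with hx | hx
        · exact ⟨0, by simpa using hx⟩
        · rw [← hun', Set.mem_iUnion] at hx
          obtain ⟨j, hj⟩ := hx
          exact ⟨j.succ, by simpa using hj⟩
    · intro i
      refine Fin.cases ?_ ?_ i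
      · simp only [Fin.cons_zero]
        rw [hBA]
        simp
      · intro j; simpa using hodd' j
    · intro i
      refine Fin.cases ?_ ?_ i
      · rw [Fin.cons_zero]; exact hconA
      · intro j; rw [Fin.cons_succ]; exact hcon' j

end TreePartitionAux

/-- Claim 1 of Theorem `3.1`: if `T` is a tree and `B ⊆ V(T)` satisfies `|B| ≥ k` and
`|B| ≡ k (mod 2)`, then `V(T)` can be partitioned into `k` nonempty sets, each
containing an odd number of vertices of `B` and each inducing a subtree of `T`. -/
theorem tree_partition_odd_subtrees {V : Type*} [Fintype V] (T : SimpleGraph V)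
    (hT : T.IsTree) (k : ℕ) (hk : 1 ≤ k) (B : Set V)
    (hB : k ≤ B.ncard) (hpar : B.ncard % 2 = k % 2) :
    ∃ P : Fin k → Set V,
      (∀ i, (P i).Nonempty) ∧
      (∀ i j, i ≠ j → Disjoint (P i) (P j)) ∧
      (⋃ i, P i) = Set.univ ∧
      (∀ i, Odd (B ∩ P i).ncard) ∧
      (∀ i, (T.induce (P i)).Connected) := by
  classical
  obtain ⟨n, rfl⟩ : ∃ n, k = n + 1 := ⟨k - 1, by omega⟩
  have hconn : (T.induce (Set.univ : Set V)).Connected :=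
    (SimpleGraph.induceUnivIso T).connected_iff.mpr hT.isConnected
  obtain ⟨P, h1, h2, h3, h4, h5⟩ :=
    TreePartitionAux.aux hT B n Set.univ hconn (by simpa using hB) (by simpa using hpar)
  exact ⟨P, h1, h2, by simpa using h3, by simpa using h4, h5⟩
end

section
/- Let G be a finite connected 2d-regular simple graph with an odd number of vertices, where d ≥ 1. Then G contains d pairwise edge-disjoint odd circuits. -/
open SimpleGraph

/-- `G` contains `k` pairwise edge-disjoint odd circuits (cycles of odd length). -/
def HasKEdgeDisjointOddCircuits {V : Type*} (G : SimpleGraph V) (k : ℕ) : Prop :=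
  ∃ (u : Fin k → V) (c : (i : Fin k) → G.Walk (u i) (u i)),
    (∀ i, (c i).IsCycle) ∧
    (∀ i, Odd (c i).length) ∧
    (∀ i j, i ≠ j → ∀ e, e ∈ (c i).edges → e ∉ (c j).edges)

lemma exists_cycle_of_even_deg {V : Type*} [Fintype V] {H : SimpleGraph V}
    (hev : ∀ v, Even (H.neighborSet v).ncard) {a b : V} (hab : H.Adj a b) :
    ∃ (u : V) (c : H.Walk u u), c.IsCycle := by
  classical
  suffices key : ∀ (k : ℕ) (v : V) (p : H.Walk v a), p.IsPath → 1 ≤ p.length →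
      Fintype.card V ≤ p.length + k → ∃ (u : V) (c : H.Walk u u), c.IsCycle by
    refine key (Fintype.card V) b (Walk.cons hab.symm Walk.nil) ?_ (by simp) (by simp)
    simp [Walk.cons_isPath_iff, hab.ne']
  intro k
  induction k with
  | zero =>
    intro v p hp h1 hcard
    exact absurd hp.length_lt (by omega)
  | succ k ih =>
    intro v p hp h1 hcard
    cases p with
    | nil => simp at h1
    | @cons _ x _ hvx q =>
      have hxmem : x ∈ H.neighborSet v := hvx
      have hpos : 0 < (H.neighborSet v).ncard := by
        rw [Set.ncard_pos (Set.toFinite _)]; exact ⟨x, hxmem⟩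
      have h2 : 1 < (H.neighborSet v).ncard := by
        obtain ⟨t, ht⟩ := hev v; omega
      obtain ⟨w, hw, hwx⟩ := (H.neighborSet v).exists_ne_of_one_lt_ncard h2 x
      have hadj : H.Adj v w := hw
      by_cases hsup : w ∈ (Walk.cons hvx q).support
      · refine ⟨w, Walk.cons hadj.symm ((Walk.cons hvx q).takeUntil w hsup), ?_⟩
        rw [Walk.cons_isCycle_iff]
        refine ⟨hp.takeUntil _, fun hmem => ?_⟩
        have hmem' := Walk.edges_takeUntil_subset _ hsup hmem
        rw [Walk.edges_cons, List.mem_cons] at hmem'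
        rcases hmem' with h' | h'
        · rw [Sym2.eq_iff] at h'
          rcases h' with ⟨h1', h2'⟩ | ⟨h1', h2'⟩
          · exact (H.ne_of_adj hadj) h1'.symm
          · exact hwx h1'
        · have : v ∈ q.support := Walk.snd_mem_support_of_mem_edges q h'
          rw [Walk.cons_isPath_iff] at hp
          exact hp.2 this
      · refine ih w (Walk.cons hadj.symm (Walk.cons hvx q)) ?_ (by simp) ?_
        · rw [Walk.cons_isPath_iff]; exact ⟨hp, hsup⟩
        · simp only [Walk.length_cons] at hcard ⊢; omega

lemma count_dropLast_eq_count_tail {V : Type*} [DecidableEq V] {l : List V} (hl : l ≠ [])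
    (h : l.getLast hl = l.head hl) (v : V) : l.dropLast.count v = l.tail.count v := by
  cases l with
  | nil => simp
  | cons a t =>
    cases t with
    | nil => simp
    | cons b t' =>
      have ht : (b :: t') ≠ [] := List.cons_ne_nil _ _
      have hgl : (b :: t').getLast ht = a := by
        rw [← List.getLast_cons (h := ht)]; exact h
      conv_rhs => rw [List.tail_cons, ← List.dropLast_append_getLast ht, hgl]
      rw [List.dropLast_cons₂]
      by_cases hav : a = v <;> simp [hav, List.count_append, List.count_cons]

lemma walk_count_dropLast_eq_count_tail {V : Type*} [DecidableEq V] {H : SimpleGraph V} {u : V}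
    (c : H.Walk u u) (v : V) :
    c.support.dropLast.count v = c.support.tail.count v :=
  count_dropLast_eq_count_tail (c.support_ne_nil)
    (by rw [c.getLast_support, c.head_support]) v

/-- In a closed walk, for any vertex `v`, the number of darts starting at `v`
equals the number of darts ending at `v`. -/
lemma closed_walk_countP_darts {V : Type*} [DecidableEq V] {H : SimpleGraph V} {u : V}
    (c : H.Walk u u) (v : V) :
    (c.darts.countP (fun d => d.fst = v)) = (c.darts.countP (fun d => d.snd = v)) := by
  have h1 : (c.darts.countP (fun d => d.fst = v)) = (c.darts.map (·.fst)).count v := by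
    rw [List.count_eq_countP, List.countP_map]
    congr 1
  have h2 : (c.darts.countP (fun d => d.snd = v)) = (c.darts.map (·.snd)).count v := by
    rw [List.count_eq_countP, List.countP_map]
    congr 1
  rw [h1, h2, c.map_fst_darts, c.map_snd_darts]
  exact count_dropLast_eq_count_tail (c.support_ne_nil)
    (by rw [c.getLast_support, c.head_support]) v

lemma trail_darts_nodup {V : Type*} {H : SimpleGraph V} {x y : V} {p : H.Walk x y}
    (hp : p.IsTrail) : p.darts.Nodup := by
  have h : p.edges = p.darts.map Dart.edge := rfl
  have := hp.edges_nodup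
  rw [h] at this
  exact this.of_map

lemma trail_dart_eq_of_edge_eq {V : Type*} {H : SimpleGraph V} {x y : V} {p : H.Walk x y}
    (hp : p.IsTrail) {d d' : H.Dart} (hd : d ∈ p.darts) (hd' : d' ∈ p.darts)
    (h : d.edge = d'.edge) : d = d' := by
  have he : p.edges = p.darts.map Dart.edge := rfl
  have := hp.edges_nodup
  rw [he] at this
  exact List.inj_on_of_nodup_map this hd hd' h

lemma dart_edge_cases {V : Type*} {H : SimpleGraph V} {d : H.Dart} {x y : V}
    (h : d.edge = s(x, y)) : d.toProd = (x, y) ∨ d.toProd = (y, x) := by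
  have : s(d.fst, d.snd) = s(x, y) := h
  rw [Sym2.eq_iff] at this
  rcases this with ⟨h1, h2⟩ | ⟨h1, h2⟩
  · left; exact Prod.ext h1 h2
  · right; exact Prod.ext h1 h2

lemma even_ncard_incident {V : Type*} [Fintype V] [DecidableEq V] {H : SimpleGraph V} {u : V}
    {c : H.Walk u u} (hc : c.IsTrail) (v : V) :
    Even {w | s(v, w) ∈ c.edges}.ncard := by
  classical
  set Nout : Finset V := ((c.darts.filter (fun d => d.fst = v)).map (·.snd)).toFinset with hNout
  set Nin : Finset V := ((c.darts.filter (fun d => d.snd = v)).map (·.fst)).toFinset with hNin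
  have hnd := trail_darts_nodup hc
  -- membership characterizations
  have hmemout : ∀ w, w ∈ Nout ↔ ∃ d ∈ c.darts, d.toProd = (v, w) := by
    intro w
    simp only [hNout, List.mem_toFinset, List.mem_map, List.mem_filter]
    constructor
    · rintro ⟨d, ⟨hd, hfst⟩, rfl⟩
      exact ⟨d, hd, Prod.ext (by simpa using hfst) rfl⟩
    · rintro ⟨d, hd, hp⟩
      exact ⟨d, ⟨hd, by simp [Prod.ext_iff] at hp; simp [hp.1]⟩, by simp [Prod.ext_iff] at hp; simp [hp.2]⟩
  have hmemin : ∀ w, w ∈ Nin ↔ ∃ d ∈ c.darts, d.toProd = (w, v) := by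
    intro w
    simp only [hNin, List.mem_toFinset, List.mem_map, List.mem_filter]
    constructor
    · rintro ⟨d, ⟨hd, hsnd⟩, rfl⟩
      exact ⟨d, hd, Prod.ext rfl (by simpa using hsnd)⟩
    · rintro ⟨d, hd, hp⟩
      exact ⟨d, ⟨hd, by simp [Prod.ext_iff] at hp; simp [hp.2]⟩, by simp [Prod.ext_iff] at hp; simp [hp.1]⟩
  -- the incident set equals the union
  have hset : {w | s(v, w) ∈ c.edges} = ↑(Nout ∪ Nin) := by
    ext w
    simp only [Set.mem_setOf_eq, Finset.coe_union, Set.mem_union, Finset.mem_coe]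
    constructor
    · intro hw
      have he : c.edges = c.darts.map Dart.edge := rfl
      rw [he, List.mem_map] at hw
      obtain ⟨d, hd, hde⟩ := hw
      rcases dart_edge_cases hde with h' | h'
      · exact Or.inl ((hmemout w).2 ⟨d, hd, h'⟩)
      · exact Or.inr ((hmemin w).2 ⟨d, hd, h'⟩)
    · intro hw
      have he : c.edges = c.darts.map Dart.edge := rfl
      rcases hw with hw | hw
      · obtain ⟨d, hd, hp⟩ := (hmemout w).1 hw
        have : d.edge = s(v, w) := by
          show s(d.fst, d.snd) = _
          rw [Prod.ext_iff] at hp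
          rw [hp.1, hp.2]
        rw [← this, he]
        exact List.mem_map_of_mem hd
      · obtain ⟨d, hd, hp⟩ := (hmemin w).1 hw
        have : d.edge = s(w, v) := by
          show s(d.fst, d.snd) = _
          rw [Prod.ext_iff] at hp
          rw [hp.1, hp.2]
        rw [Sym2.eq_swap, ← this, he]
        exact List.mem_map_of_mem hd
  -- disjointness
  have hdisj : Disjoint Nout Nin := by
    rw [Finset.disjoint_left]
    intro w hwout hwin
    obtain ⟨d1, hd1, hp1⟩ := (hmemout w).1 hwout
    obtain ⟨d2, hd2, hp2⟩ := (hmemin w).1 hwin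
    have he1 : d1.edge = s(v, w) := by
      show s(d1.fst, d1.snd) = _
      rw [Prod.ext_iff] at hp1; rw [hp1.1, hp1.2]
    have he2 : d2.edge = s(v, w) := by
      show s(d2.fst, d2.snd) = _
      rw [Prod.ext_iff] at hp2; rw [hp2.1, hp2.2, Sym2.eq_swap]
    have hd12 : d1 = d2 := trail_dart_eq_of_edge_eq hc hd1 hd2 (he1.trans he2.symm)
    have : (v, w) = (w, v) := by rw [← hp1, hd12, hp2]
    have hvw : v = w := (Prod.ext_iff.1 this).1
    have := d1.adj
    rw [hp1] at this
    exact H.loopless.irrefl v (hvw ▸ this)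
  -- cardinalities
  have hcout : Nout.card = c.darts.countP (fun d => d.fst = v) := by
    rw [hNout, List.toFinset_card_of_nodup, List.length_map, List.countP_eq_length_filter]
    exact (List.Nodup.filter _ hnd).map_on (by
      intro d hd d' hd' hsnd
      simp only [List.mem_filter, decide_eq_true_eq] at hd hd'
      exact Dart.ext _ _ (Prod.ext (hd.2.trans hd'.2.symm) hsnd))
  have hcin : Nin.card = c.darts.countP (fun d => d.snd = v) := by
    rw [hNin, List.toFinset_card_of_nodup, List.length_map, List.countP_eq_length_filter]
    exact (List.Nodup.filter _ hnd).map_on (by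
      intro d hd d' hd' hfst
      simp only [List.mem_filter, decide_eq_true_eq] at hd hd'
      exact Dart.ext _ _ (Prod.ext hfst (hd.2.trans hd'.2.symm)))
  rw [hset, Set.ncard_coe_finset, Finset.card_union_of_disjoint hdisj, hcout, hcin,
    closed_walk_countP_darts c v]
  exact ⟨_, rfl⟩

/-- An Eulerian orientation of an even graph. -/
lemma exists_orientation {V : Type*} [Fintype V] [DecidableEq V] :
    ∀ (m : ℕ) (H : SimpleGraph V), H.edgeSet.ncard ≤ m →
    (∀ v, Even (H.neighborSet v).ncard) →
    ∃ A : Finset (V × V),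
      (∀ p ∈ A, H.Adj p.1 p.2) ∧
      (∀ x y : V, H.Adj x y → (((x, y) ∈ A) ↔ ((y, x) ∉ A))) ∧
      (∀ v, (A.filter (fun p => p.1 = v)).card = (A.filter (fun p => p.2 = v)).card) := by
  intro m
  induction m with
  | zero =>
    intro H hcard _
    have hE : H.edgeSet = ∅ := by
      rw [← Set.ncard_eq_zero (Set.toFinite _)]; omega
    refine ⟨∅, by simp, fun x y hxy => absurd ((H.mem_edgeSet).2 hxy) (by simp [hE]), by simp⟩
  | succ m ih =>
    intro H hcard hev
    by_cases hE : H.edgeSet = ∅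
    · refine ⟨∅, by simp, fun x y hxy => absurd ((H.mem_edgeSet).2 hxy) (by simp [hE]), by simp⟩
    · obtain ⟨e, he⟩ := Set.nonempty_iff_ne_empty.2 hE
      induction e using Sym2.ind with
      | _ a b =>
      have hab : H.Adj a b := H.mem_edgeSet.1 he
      obtain ⟨u, c, ccyc⟩ := exists_cycle_of_even_deg hev hab
      have ctrail : c.IsTrail := ccyc.isCircuit.isTrail
      set H' := H.deleteEdges {e | e ∈ c.edges} with hH'
      -- edge set decreases
      have hedge' : H'.edgeSet = H.edgeSet \ {e | e ∈ c.edges} :=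
        H.edgeSet_deleteEdges _
      have hlt : H'.edgeSet.ncard < H.edgeSet.ncard := by
        apply Set.ncard_lt_ncard _ (Set.toFinite _)
        rw [hedge']
        constructor
        · exact Set.diff_subset
        · intro hsub
          have hlen : 0 < c.edges.length := by
            rw [c.length_edges]
            have := ccyc.three_le_length; omega
          obtain ⟨e0, he0⟩ := List.exists_mem_of_length_pos hlen
          have he0' : e0 ∈ H.edgeSet := c.edges_subset_edgeSet he0
          have := hsub he0'
          simp at this
          exact this.2 he0
      -- degrees of H' are even
      have hev' : ∀ v, Even (H'.neighborSet v).ncard := by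
        intro v
        have hns : H'.neighborSet v = H.neighborSet v \ {w | s(v, w) ∈ c.edges} := by
          ext w
          simp only [mem_neighborSet, hH', deleteEdges_adj, Set.mem_diff, Set.mem_setOf_eq]
        have hsub : {w | s(v, w) ∈ c.edges} ⊆ H.neighborSet v := by
          intro w hw
          exact H.mem_edgeSet.1 (c.edges_subset_edgeSet hw)
        rw [hns, Set.ncard_diff hsub (Set.toFinite _)]
        obtain ⟨s, hs⟩ := hev v
        obtain ⟨t, ht⟩ := even_ncard_incident ctrail v
        have hle : {w | s(v, w) ∈ c.edges}.ncard ≤ (H.neighborSet v).ncard :=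
          Set.ncard_le_ncard hsub (Set.toFinite _)
        rw [hs, ht] at *
        exact ⟨s - t, by omega⟩
      obtain ⟨A', hA'1, hA'2, hA'3⟩ := ih H' (by omega) hev'
      -- the darts of the cycle
      set D : Finset (V × V) := (c.darts.map Dart.toProd).toFinset with hD
      have hDmem : ∀ x y : V, (x, y) ∈ D ↔ ∃ d ∈ c.darts, d.toProd = (x, y) := by
        intro x y; simp [hD]
      have hDedge : ∀ x y : V, (x, y) ∈ D → s(x, y) ∈ c.edges := by
        intro x y hxy
        obtain ⟨d, hd, hdp⟩ := (hDmem x y).1 hxy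
        have : d.edge = s(x, y) := by
          show s(d.fst, d.snd) = _
          rw [Prod.ext_iff] at hdp; rw [hdp.1, hdp.2]
        rw [← this]
        exact List.mem_map_of_mem hd
      have hDadj : ∀ x y : V, (x, y) ∈ D → H.Adj x y := by
        intro x y hxy
        obtain ⟨d, hd, hdp⟩ := (hDmem x y).1 hxy
        have := d.adj
        rw [Prod.ext_iff] at hdp
        rwa [hdp.1, hdp.2] at this
      have hDexist : ∀ x y : V, s(x, y) ∈ c.edges → (x, y) ∈ D ∨ (y, x) ∈ D := by
        intro x y hxy
        have he : c.edges = c.darts.map Dart.edge := rfl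
        rw [he, List.mem_map] at hxy
        obtain ⟨d, hd, hde⟩ := hxy
        rcases dart_edge_cases hde with h' | h'
        · exact Or.inl ((hDmem x y).2 ⟨d, hd, h'⟩)
        · exact Or.inr ((hDmem y x).2 ⟨d, hd, h'⟩)
      have hDnotboth : ∀ x y : V, (x, y) ∈ D → (y, x) ∈ D → False := by
        intro x y hxy hyx
        obtain ⟨d1, hd1, hp1⟩ := (hDmem x y).1 hxy
        obtain ⟨d2, hd2, hp2⟩ := (hDmem y x).1 hyx
        have he1 : d1.edge = s(x, y) := by
          show s(d1.fst, d1.snd) = _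
          rw [Prod.ext_iff] at hp1; rw [hp1.1, hp1.2]
        have he2 : d2.edge = s(x, y) := by
          show s(d2.fst, d2.snd) = _
          rw [Prod.ext_iff] at hp2; rw [hp2.1, hp2.2, Sym2.eq_swap]
        have := trail_dart_eq_of_edge_eq ctrail hd1 hd2 (he1.trans he2.symm)
        rw [this, hp2] at hp1
        have hxyeq : y = x := (Prod.ext_iff.1 hp1).1
        exact H.loopless.irrefl _ (hxyeq ▸ hDadj x y hxy)
      have hA'D : ∀ p ∈ A', p ∉ D := by
        rintro ⟨x, y⟩ hp hpD
        have := hA'1 _ hp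
        rw [hH'] at this
        simp only [deleteEdges_adj, Set.mem_setOf_eq] at this
        exact this.2 (hDedge x y hpD)
      have hdisjAD : Disjoint A' D := by
        rw [Finset.disjoint_left]; exact hA'D
      refine ⟨A' ∪ D, ?_, ?_, ?_⟩
      · rintro ⟨x, y⟩ hp
        rcases Finset.mem_union.1 hp with h' | h'
        · have := hA'1 _ h'
          rw [hH'] at this
          simp only [deleteEdges_adj, Set.mem_setOf_eq] at this
          exact this.1
        · exact hDadj x y h'
      · intro x y hxy
        by_cases hce : s(x, y) ∈ c.edges
        · have hnotA' : ∀ z w : V, s(z, w) ∈ c.edges → (z, w) ∉ A' := by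
            intro z w hzw h
            have := hA'1 _ h
            rw [hH'] at this
            simp only [deleteEdges_adj, Set.mem_setOf_eq] at this
            exact this.2 hzw
          have hxA' : (x, y) ∉ A' := hnotA' x y hce
          have hyA' : (y, x) ∉ A' := hnotA' y x (by rwa [Sym2.eq_swap])
          constructor
          · intro h hyx
            exact hDnotboth x y ((Finset.mem_union.1 h).resolve_left hxA')
              ((Finset.mem_union.1 hyx).resolve_left hyA')
          · intro hn
            rcases hDexist x y hce with h' | h'
            · exact Finset.mem_union_right _ h'
            · exact absurd (Finset.mem_union_right _ h') hn
        · have hxD : (x, y) ∉ D := fun h => hce (hDedge x y h)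
          have hyD : (y, x) ∉ D := fun h => hce (by rw [Sym2.eq_swap]; exact hDedge y x h)
          have hadj' : H'.Adj x y := by
            rw [hH']
            simp only [deleteEdges_adj, Set.mem_setOf_eq]
            exact ⟨hxy, hce⟩
          have hiff := hA'2 x y hadj'
          constructor
          · intro h hyx
            exact (hiff.1 ((Finset.mem_union.1 h).resolve_right hxD))
              ((Finset.mem_union.1 hyx).resolve_right hyD)
          · intro hn
            refine Finset.mem_union_left _ (hiff.2 fun h => hn (Finset.mem_union_left _ h))
      · intro v
        have hmapnodup : (c.darts.map Dart.toProd).Nodup :=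
          (trail_darts_nodup ctrail).map (fun d d' h => Dart.ext d d' h)
        have hfilt : ∀ (P : V × V → Prop) (_ : DecidablePred P),
            (D.filter P).card = (c.darts.map Dart.toProd).countP (fun p => P p) := by
          intro P hP
          have heq : Finset.filter P (c.darts.map Dart.toProd).toFinset
              = ((c.darts.map Dart.toProd).filter (fun a => decide (P a))).toFinset := by
            ext z
            simp [List.mem_filter]
          rw [hD, heq, List.toFinset_card_of_nodup (hmapnodup.filter _),
            List.countP_eq_length_filter]
        rw [Finset.filter_union, Finset.filter_union,
          Finset.card_union_of_disjoint (hdisjAD.mono (Finset.filter_subset _ _) (Finset.filter_subset _ _)),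
          Finset.card_union_of_disjoint (hdisjAD.mono (Finset.filter_subset _ _) (Finset.filter_subset _ _)),
          hA'3 v]
        congr 1
        rw [hfilt _ _, hfilt _ _, List.countP_map, List.countP_map]
        exact closed_walk_countP_darts c v

/-- A `k`-regular "bipartite" arc set decomposes into `k` disjoint perfect matchings. -/
lemma exists_matchings {V : Type*} [Fintype V] [DecidableEq V] :
    ∀ (k : ℕ) (A : Finset (V × V)),
    (∀ v, (A.filter (fun p => p.1 = v)).card = k) →
    (∀ v, (A.filter (fun p => p.2 = v)).card = k) →
    ∃ σ : Fin k → V → V,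
      (∀ i v, (v, σ i v) ∈ A) ∧
      (∀ i, Function.Injective (σ i)) ∧
      (∀ i j v, i ≠ j → σ i v ≠ σ j v) := by
  intro k
  induction k with
  | zero =>
    intro A _ _
    exact ⟨fun i => i.elim0, fun i => i.elim0, fun i => i.elim0, fun i => i.elim0⟩
  | succ k ih =>
    intro A hout hin
    set t : V → Finset V := fun v => (A.filter (fun p => p.1 = v)).image Prod.snd with ht
    have hhall : ∀ S : Finset V, S.card ≤ (S.biUnion t).card := by
      intro S
      set N := S.biUnion t with hN
      have hfib : ∀ v ∈ S, ((A.filter (fun p => p.1 ∈ S)).filter (fun p => p.1 = v))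
          = A.filter (fun p => p.1 = v) := by
        intro v hv
        ext p
        simp only [Finset.mem_filter]
        constructor
        · rintro ⟨⟨h1, _⟩, h3⟩; exact ⟨h1, h3⟩
        · rintro ⟨h1, h3⟩; exact ⟨⟨h1, h3 ▸ hv⟩, h3⟩
      have c1 : (A.filter (fun p => p.1 ∈ S)).card = (k+1) * S.card := by
        rw [Finset.card_eq_sum_card_fiberwise (f := Prod.fst) (s := A.filter (fun p => p.1 ∈ S)) (t := S)
          (fun p hp => (Finset.mem_filter.1 hp).2)]
        rw [Finset.sum_congr rfl (fun v hv => by rw [hfib v hv, hout v])]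
        simp [mul_comm]
      have hfib2 : ∀ v ∈ N, ((A.filter (fun p => p.2 ∈ N)).filter (fun p => p.2 = v))
          = A.filter (fun p => p.2 = v) := by
        intro v hv
        ext p
        simp only [Finset.mem_filter]
        constructor
        · rintro ⟨⟨h1, _⟩, h3⟩; exact ⟨h1, h3⟩
        · rintro ⟨h1, h3⟩; exact ⟨⟨h1, h3 ▸ hv⟩, h3⟩
      have c3 : (A.filter (fun p => p.2 ∈ N)).card = (k+1) * N.card := by
        rw [Finset.card_eq_sum_card_fiberwise (f := Prod.snd) (s := A.filter (fun p => p.2 ∈ N)) (t := N)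
          (fun p hp => (Finset.mem_filter.1 hp).2)]
        rw [Finset.sum_congr rfl (fun v hv => by rw [hfib2 v hv, hin v])]
        simp [mul_comm]
      have c2 : (A.filter (fun p => p.1 ∈ S)) ⊆ (A.filter (fun p => p.2 ∈ N)) := by
        intro p hp
        rw [Finset.mem_filter] at hp ⊢
        refine ⟨hp.1, Finset.mem_biUnion.2 ⟨p.1, hp.2, ?_⟩⟩
        rw [ht]
        exact Finset.mem_image.2 ⟨p, Finset.mem_filter.2 ⟨hp.1, rfl⟩, rfl⟩
      have := Finset.card_le_card c2
      rw [c1, c3] at this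
      exact Nat.le_of_mul_le_mul_left this (by omega)
    obtain ⟨f, hfinj, hft⟩ := (Finset.all_card_le_biUnion_card_iff_exists_injective t).1 hhall
    have hfA : ∀ v, (v, f v) ∈ A := by
      intro v
      have := hft v
      rw [ht, Finset.mem_image] at this
      obtain ⟨p, hp, hp2⟩ := this
      rw [Finset.mem_filter] at hp
      have hpv : p = (v, f v) := Prod.ext hp.2 hp2
      rw [hpv] at hp
      exact hp.1
    set M : Finset (V × V) := Finset.univ.image (fun v => (v, f v)) with hM
    have hMmem : ∀ p : V × V, p ∈ M ↔ p.2 = f p.1 := by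
      intro p
      rw [hM, Finset.mem_image]
      constructor
      · rintro ⟨w, _, rfl⟩; rfl
      · intro h
        exact ⟨p.1, Finset.mem_univ _, (Prod.ext rfl h.symm)⟩
    set A2 := A \ M with hA2
    have hfbij : Function.Bijective f := (Finite.injective_iff_bijective).1 hfinj
    have hout2 : ∀ v, (A2.filter (fun p => p.1 = v)).card = k := by
      intro v
      have heq : A2.filter (fun p => p.1 = v) = (A.filter (fun p => p.1 = v)).erase (v, f v) := by
        ext p
        simp only [hA2, Finset.mem_sdiff, Finset.mem_filter, Finset.mem_erase, hMmem]
        constructor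
        · rintro ⟨⟨hpA, hpM⟩, h1⟩
          refine ⟨fun he => hpM ?_, hpA, h1⟩
          rw [he]
        · rintro ⟨hne, hpA, h1⟩
          refine ⟨⟨hpA, fun hm => hne ?_⟩, h1⟩
          exact Prod.ext h1 (by rw [hm, h1])
      have hmem : (v, f v) ∈ A.filter (fun p => p.1 = v) := Finset.mem_filter.2 ⟨hfA v, rfl⟩
      rw [heq, Finset.card_erase_of_mem hmem, hout v]; omega
    have hin2 : ∀ v, (A2.filter (fun p => p.2 = v)).card = k := by
      intro v
      obtain ⟨w, hw⟩ := hfbij.2 v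
      have heq : A2.filter (fun p => p.2 = v) = (A.filter (fun p => p.2 = v)).erase (w, v) := by
        ext p
        simp only [hA2, Finset.mem_sdiff, Finset.mem_filter, Finset.mem_erase, hMmem]
        constructor
        · rintro ⟨⟨hpA, hpM⟩, h2⟩
          refine ⟨fun he => hpM ?_, hpA, h2⟩
          rw [he]
          show v = f w
          rw [hw]
        · rintro ⟨hne, hpA, h2⟩
          refine ⟨⟨hpA, fun hm => hne ?_⟩, h2⟩
          have : p.1 = w := hfinj (by rw [← hm, h2, hw])
          exact Prod.ext this h2
      have hmem : (w, v) ∈ A.filter (fun p => p.2 = v) := by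
        refine Finset.mem_filter.2 ⟨?_, rfl⟩
        rw [← hw]; exact hfA w
      rw [heq, Finset.card_erase_of_mem hmem, hin v]; omega
    obtain ⟨σ', hσ'A, hσ'inj, hσ'ne⟩ := ih A2 hout2 hin2
    refine ⟨Fin.cons f σ', ?_, ?_, ?_⟩
    · intro i v
      refine Fin.cases ?_ ?_ i
      · simpa using hfA v
      · intro j
        simpa using (Finset.mem_sdiff.1 (hσ'A j v)).1
    · intro i
      refine Fin.cases ?_ ?_ i
      · simpa using hfinj
      · intro j; simpa using hσ'inj j
    · intro i j v hij
      rcases Fin.eq_zero_or_eq_succ i with rfl | ⟨i', rfl⟩ <;>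
        rcases Fin.eq_zero_or_eq_succ j with rfl | ⟨j', rfl⟩
      · exact absurd rfl hij
      · simp only [Fin.cons_zero, Fin.cons_succ]
        intro he
        have hm := (Finset.mem_sdiff.1 (hσ'A j' v)).2
        rw [hMmem] at hm
        exact hm he.symm
      · simp only [Fin.cons_zero, Fin.cons_succ]
        intro he
        have hm := (Finset.mem_sdiff.1 (hσ'A i' v)).2
        rw [hMmem] at hm
        exact hm he
      · simp only [Fin.cons_succ]
        exact hσ'ne i' j' v (fun h => hij (by rw [h]))

/-- Build a walk from a function on initial segment of ℕ. -/
def walkOfFn {V : Type*} (G : SimpleGraph V) (f : ℕ → V) :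
    (m : ℕ) → (∀ i < m, G.Adj (f i) (f (i + 1))) → G.Walk (f 0) (f m)
  | 0, _ => Walk.nil
  | (m + 1), h => (walkOfFn G f m fun i hi => h i (by omega)).concat (h m (by omega))

lemma walkOfFn_length {V : Type*} (G : SimpleGraph V) (f : ℕ → V) (m : ℕ)
    (h : ∀ i < m, G.Adj (f i) (f (i + 1))) : (walkOfFn G f m h).length = m := by
  induction m with
  | zero => rfl
  | succ m ih => rw [walkOfFn, Walk.length_concat, ih]

lemma walkOfFn_support {V : Type*} (G : SimpleGraph V) (f : ℕ → V) (m : ℕ)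
    (h : ∀ i < m, G.Adj (f i) (f (i + 1))) :
    (walkOfFn G f m h).support = (List.range (m + 1)).map f := by
  induction m with
  | zero => rfl
  | succ m ih =>
    rw [walkOfFn, Walk.support_concat, ih, List.range_succ (n := m + 1), List.map_append]
    rfl

lemma walkOfFn_edges {V : Type*} (G : SimpleGraph V) (f : ℕ → V) (m : ℕ)
    (h : ∀ i < m, G.Adj (f i) (f (i + 1))) :
    (walkOfFn G f m h).edges = (List.range m).map (fun i => s(f i, f (i + 1))) := by
  induction m with
  | zero => rfl
  | succ m ih =>
    rw [walkOfFn, Walk.edges_concat, ih, List.range_succ, List.map_append,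
      List.concat_eq_append]
    rfl

lemma multiset_even_sum (s : Multiset ℕ) (h : ∀ x ∈ s, Even x) : Even s.sum := by
  induction s using Multiset.induction_on with
  | empty => simp
  | cons a s ih =>
    rw [Multiset.sum_cons]
    exact (h _ (Multiset.mem_cons_self _ _)).add (ih fun x hx => h x (Multiset.mem_cons_of_mem hx))

lemma exists_odd_cycle_of_perm {V : Type*} [Fintype V] [DecidableEq V] (G : SimpleGraph V)
    (σ : V → V) (hinj : Function.Injective σ) (hadj : ∀ v, G.Adj v (σ v))
    (hodd : Odd (Fintype.card V)) :
    ∃ (u : V) (w : G.Walk u u), w.IsCycle ∧ Odd w.length ∧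
      ∀ e ∈ w.edges, ∃ x, e = s(x, σ x) := by
  classical
  set e : Equiv.Perm V := Equiv.ofBijective σ (Finite.injective_iff_bijective.1 hinj) with he
  have heapp : ∀ v, e v = σ v := fun v => rfl
  have hsupp : e.support = Finset.univ := by
    ext v
    simp only [Equiv.Perm.mem_support, Finset.mem_univ, iff_true, heapp]
    exact fun hv => G.ne_of_adj (hadj v) hv.symm
  have hsum : Odd e.cycleType.sum := by
    rw [Equiv.Perm.sum_cycleType, hsupp]
    simpa using hodd
  have hoddm : ∃ m ∈ e.cycleType, Odd m := by
    by_contra hcon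
    push_neg at hcon
    have heven : Even e.cycleType.sum :=
      multiset_even_sum _ fun x hx => Nat.not_odd_iff_even.1 (hcon x hx)
    exact (Nat.not_odd_iff_even.2 heven) hsum
  obtain ⟨m, hmmem, hmodd⟩ := hoddm
  rw [Equiv.Perm.cycleType_def, Multiset.mem_map] at hmmem
  obtain ⟨c, hcmem, hcard⟩ := hmmem
  have hcfact := Equiv.Perm.mem_cycleFactorsFinset_iff.1 hcmem
  have hccyc : c.IsCycle := hcfact.1
  have hcsc : c.support.card = m := hcard
  have hm2 : 2 ≤ m := by
    rw [← hcsc]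
    exact Equiv.Perm.two_le_card_support_of_ne_one hccyc.ne_one
  have hm3 : 3 ≤ m := by
    rcases hmodd with ⟨t, ht⟩; omega
  obtain ⟨u, hu⟩ := Finset.card_pos.1 (show 0 < c.support.card by omega)
  have hco : c.IsCycleOn ↑c.support := by
    have := hccyc.isCycleOn
    convert this using 1
    ext x
    simp [Equiv.Perm.mem_support]
  set f : ℕ → V := fun i => (c ^ i) u with hf
  have hstep : ∀ i, f (i + 1) = c (f i) := by
    intro i
    rw [hf]
    show (c ^ (i + 1)) u = _
    rw [pow_succ']
    rfl
  have hfsupp : ∀ i, f i ∈ c.support := by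
    intro i
    induction i with
    | zero => exact hu
    | succ i ih => rw [hstep i]; exact (Equiv.Perm.apply_mem_support).2 ih
  have hpow : ∀ (x : V), x ∈ c.support → ∀ n, ((c ^ n) x = x ↔ m ∣ n) := by
    intro x hx n
    rw [← hcsc]
    exact hco.pow_apply_eq hx
  have hinjOn : ∀ i < m, ∀ j < m, f i = f j → i = j := by
    have key : ∀ i j, i ≤ j → j < m → f i = f j → i = j := by
      intro i j hij hjm hfij
      have h1 : (c ^ (j - i)) (f i) = f j := by
        show (c ^ (j - i)) ((c ^ i) u) = (c ^ j) u
        rw [← Equiv.Perm.mul_apply, ← pow_add]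
        congr 2
        omega
      have h2 : (c ^ (j - i)) (f i) = f i := by rw [h1, hfij]
      rw [hpow (f i) (hfsupp i) (j - i)] at h2
      rcases Nat.eq_zero_or_pos (j - i) with h0 | hpos
      · omega
      · have := Nat.le_of_dvd hpos h2
        omega
    intro i hi j hj hfij
    rcases le_total i j with h | h
    · exact key i j h hj hfij
    · exact (key j i h hi hfij.symm).symm
  have hfm : f m = u := by
    have := (hpow u hu m).2 dvd_rfl
    exact this
  have hf0 : f 0 = u := by
    rw [hf]; simp
  have hadjf : ∀ i, ∀ _ : i < m, G.Adj (f i) (f (i + 1)) := by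
    intro i _
    rw [hstep i, hcfact.2 (f i) (hfsupp i), heapp]
    exact hadj (f i)
  set w0 := walkOfFn G f m hadjf with hw0
  refine ⟨u, w0.copy hf0 hfm, ?_, ?_, ?_⟩
  · rw [Walk.isCycle_def]
    refine ⟨?_, ?_, ?_⟩
    · rw [Walk.isTrail_def, Walk.edges_copy, walkOfFn_edges]
      refine List.Nodup.map_on ?_ (List.nodup_range (n := m))
      intro i hi j hj hsym
      rw [List.mem_range] at hi hj
      rw [Sym2.eq_iff] at hsym
      rcases hsym with ⟨h1, _⟩ | ⟨h1, h2⟩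
      · exact hinjOn i hi j hj h1
      · -- f i = f (j+1) and f (i+1) = f j
        by_cases hjm : j + 1 = m
        · have hi0 : i = 0 := by
            apply hinjOn i hi 0 (by omega)
            rw [h1, hjm, hfm, hf0]
          have hj1 : 1 = j := by
            apply hinjOn 1 (by omega) j hj
            rw [← h2, hi0]
          omega
        · have hij1 : i = j + 1 := hinjOn i hi (j + 1) (by omega) h1
          by_cases him : i + 1 = m
          · have hj0 : j = 0 := by
              apply hinjOn j hj 0 (by omega)
              rw [← h2, him, hfm, hf0]
            omega
          · have : i + 1 = j := hinjOn (i + 1) (by omega) j hj h2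
            omega
    · intro hnil
      have : (w0.copy hf0 hfm).length = 0 := by rw [hnil]; rfl
      rw [Walk.length_copy, walkOfFn_length] at this
      omega
    · rw [Walk.support_copy, walkOfFn_support, List.range_succ_eq_map, List.map_cons,
        List.tail_cons, List.map_map]
      refine List.Nodup.map_on ?_ (List.nodup_range (n := m))
      intro i hi j hj hfij
      rw [List.mem_range] at hi hj
      have : c (f i) = c (f j) := by
        rw [← hstep i, ← hstep j]
        exact hfij
      exact hinjOn i hi j hj (c.injective this)
  · rw [Walk.length_copy, walkOfFn_length]
    exact hmodd
  · intro ed hed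
    rw [Walk.edges_copy, walkOfFn_edges, List.mem_map] at hed
    obtain ⟨i, _, rfl⟩ := hed
    refine ⟨f i, ?_⟩
    rw [hstep i, hcfact.2 (f i) (hfsupp i), heapp]


/-- A connected `2d`-regular graph of odd order contains `d` pairwise edge-disjoint
odd circuits. -/
theorem regular_oddOrder_edgeDisjoint_oddCircuits {V : Type*} [Fintype V]
    (G : SimpleGraph V) (d : ℕ) (hd : 1 ≤ d) (hconn : G.Connected)
    (hreg : ∀ v : V, (G.neighborSet v).ncard = 2 * d)
    (hodd : Odd (Fintype.card V)) :
    HasKEdgeDisjointOddCircuits G d := by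
  classical
  have hev : ∀ v : V, Even (G.neighborSet v).ncard := by
    intro v; rw [hreg v]; exact ⟨d, by ring⟩
  obtain ⟨A, hA1, hA2, hA3⟩ := exists_orientation (G.edgeSet.ncard) G le_rfl hev
  -- the out-degree of every vertex in the orientation is `d`
  have houtd : ∀ v, (A.filter (fun p => p.1 = v)).card = d := by
    intro v
    set Nout := (A.filter (fun p => p.1 = v)).image Prod.snd with hNout
    set Nin := (A.filter (fun p => p.2 = v)).image Prod.fst with hNin
    have hNoutmem : ∀ w, w ∈ Nout ↔ (v, w) ∈ A := by
      intro w
      rw [hNout, Finset.mem_image]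
      constructor
      · rintro ⟨p, hp, rfl⟩
        rw [Finset.mem_filter] at hp
        have : p = (v, p.2) := Prod.ext hp.2 rfl
        rw [← this]; exact hp.1
      · intro h
        exact ⟨(v, w), Finset.mem_filter.2 ⟨h, rfl⟩, rfl⟩
    have hNinmem : ∀ w, w ∈ Nin ↔ (w, v) ∈ A := by
      intro w
      rw [hNin, Finset.mem_image]
      constructor
      · rintro ⟨p, hp, rfl⟩
        rw [Finset.mem_filter] at hp
        have : p = (p.1, v) := Prod.ext rfl hp.2
        rw [← this]; exact hp.1
      · intro h
        exact ⟨(w, v), Finset.mem_filter.2 ⟨h, rfl⟩, rfl⟩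
    have hcout : Nout.card = (A.filter (fun p => p.1 = v)).card := by
      rw [hNout]
      apply Finset.card_image_of_injOn
      intro p hp q hq hpq
      rw [Finset.mem_coe, Finset.mem_filter] at hp hq
      exact Prod.ext (hp.2.trans hq.2.symm) hpq
    have hcin : Nin.card = (A.filter (fun p => p.2 = v)).card := by
      rw [hNin]
      apply Finset.card_image_of_injOn
      intro p hp q hq hpq
      rw [Finset.mem_coe, Finset.mem_filter] at hp hq
      exact Prod.ext hpq (hp.2.trans hq.2.symm)
    have hdisj : Disjoint Nout Nin := by
      rw [Finset.disjoint_left]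
      intro w hw1 hw2
      rw [hNoutmem] at hw1
      rw [hNinmem] at hw2
      exact (hA2 v w (hA1 _ hw1)).1 hw1 hw2
    have hunion : Nout ∪ Nin = Finset.univ.filter (fun w => G.Adj v w) := by
      ext w
      rw [Finset.mem_union, hNoutmem, hNinmem, Finset.mem_filter]
      constructor
      · rintro (h | h)
        · exact ⟨Finset.mem_univ _, hA1 _ h⟩
        · exact ⟨Finset.mem_univ _, (hA1 _ h).symm⟩
      · rintro ⟨-, hadj⟩
        by_cases hvw : (v, w) ∈ A
        · exact Or.inl hvw
        · refine Or.inr ?_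
          by_contra hwv
          exact hwv ((hA2 w v hadj.symm).2 hvw)
    have hcard2d : (Finset.univ.filter (fun w => G.Adj v w)).card = 2 * d := by
      have hset : G.neighborSet v = ↑(Finset.univ.filter (fun w => G.Adj v w)) := by
        ext w; simp
      rw [← Set.ncard_coe_finset, ← hset, hreg v]
    have := Finset.card_union_of_disjoint hdisj
    rw [hunion, hcard2d, hcout, hcin, ← hA3 v] at this
    omega
  have hind : ∀ v, (A.filter (fun p => p.2 = v)).card = d := by
    intro v; rw [← hA3 v]; exact houtd v
  obtain ⟨σ, hσA, hσinj, hσne⟩ := exists_matchings d A houtd hind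
  have hadjσ : ∀ (i : Fin d) (v : V), G.Adj v (σ i v) := fun i v => hA1 _ (hσA i v)
  choose u w hcyc hlen hedge using fun i : Fin d =>
    exists_odd_cycle_of_perm G (σ i) (hσinj i) (hadjσ i) hodd
  refine ⟨u, w, hcyc, hlen, ?_⟩
  intro i j hij ed hei hej
  obtain ⟨x, rfl⟩ := hedge i ed hei
  obtain ⟨y, hy⟩ := hedge j _ hej
  rw [Sym2.eq_iff] at hy
  rcases hy with ⟨rfl, h2⟩ | ⟨h1, h2⟩
  · exact hσne i j _ hij h2
  · have harc1 : (x, y) ∈ A := by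
      have := hσA i x
      rwa [h2] at this
    have harc2 : (y, x) ∈ A := by
      have := hσA j y
      rwa [← h1] at this
    exact (hA2 x y (hA1 _ harc1)).1 harc1 harc2
end

section
/- Let H be a finite connected bipartite simple graph with bipartition (V_1, V_2) whose vertices of odd degree are exactly four distinct vertices a_1, a_2 ∈ V_1 and a_3, a_4 ∈ V_2. Then the edge set of H can be partitioned into the edge sets of two subgraphs H_{1,3} and H_{2,4}, each with an odd number of edges, where H_{1,3} is an a_1-a_3-eulerian subgraph and H_{2,4} is an a_2-a_4-eulerian subgraph. -/
open SimpleGraph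

private lemma trail_nbr_countP {V : Type*} [Fintype V] [DecidableEq V] {G : SimpleGraph V}
    {a b : V} {p : G.Walk a b} (hp : p.IsTrail) (w : V) :
    {x | s(w, x) ∈ p.edges}.ncard = p.edges.countP (fun e => w ∈ e) := by
  induction p with
  | nil => simp
  | @cons u c d h q ih =>
    rw [Walk.isTrail_cons] at hp
    rw [Walk.edges_cons, List.countP_cons]
    by_cases hw : w ∈ s(u, c)
    · have hcount : (if (fun e => decide (w ∈ e)) s(u, c) = true then 1 else 0) = 1 := by
        simp [hw]
      rw [hcount]
      rcases Sym2.mem_iff.mp hw with rfl | rfl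
      · -- w = u
        have hset : {x | s(w, x) ∈ s(w, c) :: q.edges} = insert c {x | s(w, x) ∈ q.edges} := by
          ext x
          simp only [Set.mem_setOf_eq, List.mem_cons, Set.mem_insert_iff, Sym2.congr_right]
        have hc' : c ∉ {x | s(w, x) ∈ q.edges} := hp.2
        rw [hset, Set.ncard_insert_of_notMem hc' (Set.toFinite _), ih hp.1]
      · -- w = c
        have hswap : s(u, w) = s(w, u) := Sym2.eq_swap
        have hset : {x | s(w, x) ∈ s(u, w) :: q.edges} = insert u {x | s(w, x) ∈ q.edges} := by
          ext x
          rw [hswap]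
          simp only [Set.mem_setOf_eq, List.mem_cons, Set.mem_insert_iff, Sym2.congr_right]
        have hu' : u ∉ {x | s(w, x) ∈ q.edges} := by
          intro hc
          apply hp.2
          rwa [hswap]
        rw [hset, Set.ncard_insert_of_notMem hu' (Set.toFinite _), ih hp.1]
    · have hcount : (if (fun e => decide (w ∈ e)) s(u, c) = true then 1 else 0) = 0 := by
        simp [hw]
      rw [hcount, add_zero]
      have hset : {x | s(w, x) ∈ s(u, c) :: q.edges} = {x | s(w, x) ∈ q.edges} := by
        ext x
        simp only [Set.mem_setOf_eq, List.mem_cons]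
        constructor
        · rintro (hx | hx)
          · exact absurd (hx ▸ Sym2.mem_mk_left w x) hw
          · exact hx
        · exact Or.inr
      rw [hset, ih hp.1]


private lemma odd_sum_iff_card {V : Type*} [DecidableEq V] (s : Finset V) (f : V → ℕ) :
    Odd (∑ v ∈ s, f v) ↔ Odd (s.filter (fun v => Odd (f v))).card := by
  classical
  rw [Nat.odd_iff, Nat.odd_iff, Finset.sum_nat_mod]
  congr 1
  have h1 : ∀ v ∈ s, f v % 2 = if Odd (f v) then 1 else 0 := by
    intro v _
    rcases Nat.even_or_odd (f v) with hv | hv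
    · simp [Nat.even_iff.mp hv, Nat.not_odd_iff_even.mpr hv]
    · simp [hv, Nat.odd_iff.mp hv]
  rw [Finset.sum_congr rfl h1]
  have h2 : (∑ x ∈ s, if Odd (f x) then 1 else 0) = (s.filter (fun v => Odd (f v))).card := by
    rw [Finset.sum_boole]
    norm_num
  rw [h2]

private lemma bip_edge_count {V : Type*} [Fintype V] {H : SimpleGraph V} {V1 V2 : Set V}
    (hdisj : Disjoint V1 V2)
    (hbip : ∀ u w : V, H.Adj u w → (u ∈ V1 ∧ w ∈ V2) ∨ (u ∈ V2 ∧ w ∈ V1))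
    (K : H.Subgraph) (s1 : Finset V) (hs1 : ∀ v, v ∈ s1 ↔ v ∈ V1) :
    K.edgeSet.ncard = ∑ v ∈ s1, (K.neighborSet v).ncard := by
  classical
  set PP : Set (V × V) := {p | p.1 ∈ V1 ∧ K.Adj p.1 p.2} with hPP
  have himg : K.edgeSet = (fun p : V × V => s(p.1, p.2)) '' PP := by
    ext e
    induction e using Sym2.ind with
    | _ x y =>
      constructor
      · intro he
        rw [Subgraph.mem_edgeSet] at he
        rcases hbip x y (K.adj_sub he) with ⟨hx, _⟩ | ⟨_, hy⟩
        · exact ⟨(x, y), ⟨hx, he⟩, rfl⟩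
        · exact ⟨(y, x), ⟨hy, he.symm⟩, Sym2.eq_swap⟩
      · rintro ⟨⟨a', b'⟩, ⟨-, hadj⟩, heq⟩
        simp only [Sym2.eq_iff] at heq
        rw [Subgraph.mem_edgeSet]
        rcases heq with ⟨rfl, rfl⟩ | ⟨rfl, rfl⟩
        · exact hadj
        · exact hadj.symm
  have hinj : Set.InjOn (fun p : V × V => s(p.1, p.2)) PP := by
    rintro ⟨a', b'⟩ ⟨ha', hab⟩ ⟨c', d'⟩ ⟨hc', hcd⟩ heq
    simp only [Sym2.eq_iff] at heq
    rcases heq with ⟨h1, h2⟩ | ⟨h1, h2⟩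
    · simp [h1, h2]
    · exfalso
      rcases hbip c' d' (K.adj_sub hcd) with ⟨_, hd⟩ | ⟨hc2, _⟩
      · exact Set.disjoint_left.mp hdisj ha' (h1 ▸ hd)
      · exact Set.disjoint_left.mp hdisj hc' hc2
  rw [himg, Set.ncard_image_of_injOn hinj, Set.ncard_eq_toFinset_card' PP]
  rw [Finset.card_eq_sum_card_fiberwise (f := Prod.fst) (t := s1)
    (fun p hp => (hs1 p.1).mpr (Set.mem_toFinset.mp hp).1)]
  refine Finset.sum_congr rfl fun v hv => ?_
  rw [Set.ncard_eq_toFinset_card' (K.neighborSet v)]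
  apply Finset.card_bij (fun p _ => p.2)
  · rintro ⟨a', b'⟩ hp
    simp only [Finset.mem_filter, Set.mem_toFinset] at hp ⊢
    obtain ⟨⟨-, hadj⟩, rfl⟩ := hp
    exact hadj
  · rintro ⟨a', b'⟩ hp ⟨c', d'⟩ hq h
    simp only [Finset.mem_filter, Set.mem_toFinset] at hp hq
    exact Prod.ext (hp.2.trans hq.2.symm) h
  · intro x hx
    simp only [Set.mem_toFinset] at hx
    refine ⟨(v, x), ?_, rfl⟩
    simp only [Finset.mem_filter, Set.mem_toFinset]
    exact ⟨⟨(hs1 v).mp hv, hx⟩, trivial⟩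

/-- A `u`-`v`-eulerian subgraph of `G`: a connected subgraph containing `u` and `v`
in which every vertex has even degree, except that when `u ≠ v` the vertices `u` and
`v` are exactly the vertices of odd degree. -/
def IsUVEulerianSubgraph {V : Type*} (G : SimpleGraph V) (u v : V)
    (K : G.Subgraph) : Prop :=
  K.Connected ∧ u ∈ K.verts ∧ v ∈ K.verts ∧
  ∀ w ∈ K.verts, (Odd ((K.neighborSet w).ncard) ↔ (w = u ∨ w = v) ∧ u ≠ v)

/-- Case 1 of Proposition `6.2`: a connected bipartite graph whose odd-degree
vertices are exactly `a₁, a₂ ∈ V₁` and `a₃, a₄ ∈ V₂` decomposes into an odd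
`a₁`-`a₃`-eulerian subgraph and an odd `a₂`-`a₄`-eulerian subgraph. -/
theorem bipartite_decomposition_two_odd_semiEulerian {V : Type*} [Fintype V]
    (H : SimpleGraph V) (hconn : H.Connected)
    (V1 V2 : Set V) (hdisj : Disjoint V1 V2) (hunion : V1 ∪ V2 = Set.univ)
    (hbip : ∀ u w : V, H.Adj u w → (u ∈ V1 ∧ w ∈ V2) ∨ (u ∈ V2 ∧ w ∈ V1))
    (a1 a2 a3 a4 : V)
    (h12 : a1 ≠ a2) (h13 : a1 ≠ a3) (h14 : a1 ≠ a4)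
    (h23 : a2 ≠ a3) (h24 : a2 ≠ a4) (h34 : a3 ≠ a4)
    (ha1 : a1 ∈ V1) (ha2 : a2 ∈ V1) (ha3 : a3 ∈ V2) (ha4 : a4 ∈ V2)
    (hodd : {v : V | Odd ((H.neighborSet v).ncard)} = {a1, a2, a3, a4}) :
    ∃ K1 K2 : H.Subgraph,
      IsUVEulerianSubgraph H a1 a3 K1 ∧ IsUVEulerianSubgraph H a2 a4 K2 ∧
      Odd K1.edgeSet.ncard ∧ Odd K2.edgeSet.ncard ∧
      Disjoint K1.edgeSet K2.edgeSet ∧ K1.edgeSet ∪ K2.edgeSet = H.edgeSet := by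
  classical
  -- the path P from a2 to a4
  obtain ⟨w0⟩ := hconn.preconnected a2 a4
  set Pw : H.Walk a2 a4 := (w0.toPath : H.Walk a2 a4) with hPwdef
  have hPt : Pw.IsTrail := w0.toPath.2.isTrail
  -- H' = H minus the edges of P
  set H' : SimpleGraph V := H.deleteEdges {e | e ∈ Pw.edges} with hH'def
  have hle : H' ≤ H := SimpleGraph.deleteEdges_le _
  have hH'adj : ∀ u v : V, H'.Adj u v ↔ H.Adj u v ∧ s(u, v) ∉ Pw.edges := by
    intro u v; rw [hH'def, SimpleGraph.deleteEdges_adj]; rfl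
  -- the component of a1
  set C : Set V := (H'.connectedComponentMk a1).supp with hCdef
  have hCadj : ∀ {u v : V}, H'.Adj u v → (u ∈ C ↔ v ∈ C) := by
    intro u v huv
    simp only [hCdef, ConnectedComponent.mem_supp_iff]
    constructor
    · intro h; rw [← h]; exact ConnectedComponent.sound huv.symm.reachable
    · intro h; rw [← h]; exact ConnectedComponent.sound huv.reachable
  have ha1C : a1 ∈ C := rfl
  -- neighbor sets in P
  have hPnsub : ∀ w, {x | s(w, x) ∈ Pw.edges} ⊆ H.neighborSet w :=
    fun w x hx => Pw.adj_of_mem_edges hx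
  have hPnodd : ∀ w, Odd ({x | s(w, x) ∈ Pw.edges}).ncard ↔ (w = a2 ∨ w = a4) := by
    intro w
    rw [trail_nbr_countP hPt w, ← Nat.not_even_iff_odd, hPt.even_countP_edges_iff w]
    push_neg
    constructor
    · rintro ⟨-, h⟩
      by_cases h2 : w = a2
      · exact Or.inl h2
      · exact Or.inr (h h2)
    · rintro (rfl | rfl)
      · exact ⟨h24, fun h => absurd rfl h⟩
      · exact ⟨h24, fun _ => rfl⟩
  -- degrees in H
  have hodd4 : ∀ v : V, Odd ((H.neighborSet v).ncard) ↔
      (v = a1 ∨ v = a2 ∨ v = a3 ∨ v = a4) := by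
    intro v
    have := Set.ext_iff.mp hodd v
    simpa using this
  -- degrees in H'
  have hH'nb : ∀ w, H'.neighborSet w = H.neighborSet w \ {x | s(w, x) ∈ Pw.edges} := by
    intro w
    ext x
    simp only [SimpleGraph.mem_neighborSet, Set.mem_diff, Set.mem_setOf_eq, hH'adj]
  have hH'odd : ∀ w, Odd ((H'.neighborSet w).ncard) ↔ (w = a1 ∨ w = a3) := by
    intro w
    rw [hH'nb w, Set.ncard_diff (hPnsub w) (Set.toFinite _),
      Nat.odd_sub (Set.ncard_le_ncard (hPnsub w) (Set.toFinite _)),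
      hodd4 w, ← Nat.not_odd_iff_even, hPnodd w]
    by_cases w1 : w = a1 <;> by_cases w2 : w = a2 <;> by_cases w3 : w = a3 <;>
      by_cases w4 : w = a4 <;> simp_all
  -- the two subgraphs
  set K1 : H.Subgraph :=
    { verts := C
      Adj := fun u v => H'.Adj u v ∧ u ∈ C
      adj_sub := fun h => hle h.1
      edge_vert := fun h => h.2
      symm := ⟨fun u v h => ⟨h.1.symm, (hCadj h.1).mp h.2⟩⟩ } with hK1def
  set K2 : H.Subgraph :=
    { verts := Cᶜ ∪ {v | v ∈ Pw.support}
      Adj := fun u v => H.Adj u v ∧ (s(u, v) ∈ Pw.edges ∨ u ∉ C)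
      adj_sub := fun h => h.1
      edge_vert := fun h =>
        h.2.elim (fun he => Or.inr (Walk.fst_mem_support_of_mem_edges Pw he)) Or.inl
      symm := ⟨by
        rintro u v ⟨hadj, he | hu⟩
        · exact ⟨hadj.symm, Or.inl (by rwa [Sym2.eq_swap])⟩
        · refine ⟨hadj.symm, ?_⟩
          by_cases he' : s(u, v) ∈ Pw.edges
          · exact Or.inl (by rwa [Sym2.eq_swap])
          · exact Or.inr fun hv => hu ((hCadj ((hH'adj u v).mpr ⟨hadj, he'⟩)).mpr hv)⟩ } with hK2def
  -- degree facts for K1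
  have hK1odd : ∀ w, Odd ((K1.neighborSet w).ncard) ↔ (w ∈ C ∧ (w = a1 ∨ w = a3)) := by
    intro w
    by_cases hw : w ∈ C
    · have hnb : K1.neighborSet w = H'.neighborSet w := by
        ext x
        show H'.Adj w x ∧ w ∈ C ↔ H'.Adj w x
        exact and_iff_left hw
      rw [hnb, hH'odd w]
      simp [hw]
    · have hnb : K1.neighborSet w = ∅ := by
        ext x
        simp only [Set.mem_empty_iff_false, iff_false]
        rintro ⟨-, hc⟩
        exact hw hc
      simp [hnb, hw]
  -- a3 lies in the component of a1
  have ha3C : a3 ∈ C := by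
    by_contra h3
    have heven := SimpleGraph.even_card_odd_degree_vertices K1.spanningCoe
    have hdeg : ∀ v, K1.spanningCoe.degree v = (K1.neighborSet v).ncard := by
      intro v
      rw [← SimpleGraph.card_neighborSet_eq_degree]
      rw [Set.ncard_eq_toFinset_card' (K1.neighborSet v), Set.toFinset_card]
      exact Fintype.card_congr (Equiv.setCongr rfl)
    have hfilt : (Finset.univ.filter fun v => Odd (K1.spanningCoe.degree v)) = {a1} := by
      ext v
      simp only [Finset.mem_filter, Finset.mem_univ, true_and, Finset.mem_singleton, hdeg,
        hK1odd]
      constructor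
      · rintro ⟨hc, rfl | rfl⟩
        · rfl
        · exact absurd hc h3
      · rintro rfl
        exact ⟨ha1C, Or.inl rfl⟩
    rw [hfilt] at heven
    simp at heven
  have hK1odd' : ∀ w, Odd ((K1.neighborSet w).ncard) ↔ (w = a1 ∨ w = a3) := by
    intro w
    rw [hK1odd w]
    constructor
    · exact fun h => h.2
    · rintro (rfl | rfl)
      · exact ⟨ha1C, Or.inl rfl⟩
      · exact ⟨ha3C, Or.inr rfl⟩
  -- degree facts for K2
  have hK2odd : ∀ w, Odd ((K2.neighborSet w).ncard) ↔ (w = a2 ∨ w = a4) := by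
    intro w
    by_cases hw : w ∈ C
    · have hnb : K2.neighborSet w = {x | s(w, x) ∈ Pw.edges} := by
        ext x
        constructor
        · rintro ⟨hadj, he | hnc⟩
          · exact he
          · exact absurd hw hnc
        · intro hx
          exact ⟨hPnsub w hx, Or.inl hx⟩
      rw [hnb, hPnodd w]
    · have hnb : K2.neighborSet w = H.neighborSet w := by
        ext x
        exact ⟨fun h => h.1, fun h => ⟨h, Or.inr hw⟩⟩
      rw [hnb, hodd4 w]
      constructor
      · rintro (rfl | rfl | rfl | rfl)
        · exact absurd ha1C hw
        · exact Or.inl rfl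
        · exact absurd ha3C hw
        · exact Or.inr rfl
      · rintro (rfl | rfl)
        · exact Or.inr (Or.inl rfl)
        · exact Or.inr (Or.inr (Or.inr rfl))
  -- connectivity of K1
  have hK1conn : K1.Connected := by
    rw [Subgraph.connected_iff_forall_exists_walk_subgraph]
    have haux : ∀ {u v : V} (p : H'.Walk u v), u ∈ C → (p.mapLe hle).toSubgraph ≤ K1 := by
      intro u v p
      induction p with
      | nil =>
        intro hu
        simp only [Walk.mapLe, Walk.map_nil, Walk.toSubgraph]
        rw [SimpleGraph.singletonSubgraph_le_iff]
        exact hu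
      | @cons x y z h q ih =>
        intro hx
        simp only [Walk.mapLe, Walk.map_cons, Walk.toSubgraph]
        refine sup_le ?_ (ih ((hCadj h).mp hx))
        exact SimpleGraph.subgraphOfAdj_le_of_adj K1 ⟨h, hx⟩
    refine ⟨⟨a1, ha1C⟩, ?_⟩
    intro u v hu hv
    have hr : H'.Reachable u v := by
      have h1 : H'.connectedComponentMk u = H'.connectedComponentMk v := by
        rw [ConnectedComponent.mem_supp_iff] at hu hv
        rw [hu, hv]
      exact (SimpleGraph.ConnectedComponent.eq).mp h1
    obtain ⟨p⟩ := hr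
    exact ⟨p.mapLe hle, haux p hu⟩
  -- P's subgraph is inside K2
  have ha2K2 : a2 ∈ K2.verts := Or.inr Pw.start_mem_support
  have ha4K2 : a4 ∈ K2.verts := Or.inr Pw.end_mem_support
  have hPle : Pw.toSubgraph ≤ K2 := by
    constructor
    · rw [Walk.verts_toSubgraph]
      exact Set.subset_union_right
    · intro x y hxy
      have he : s(x, y) ∈ Pw.edges := by
        have := (Subgraph.mem_edgeSet).mpr hxy
        rwa [Walk.edgeSet_toSubgraph] at this
      exact ⟨Pw.adj_of_mem_edges he, Or.inl he⟩
  -- walks to a2 inside K2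
  have hsup : ∀ u (hu : u ∈ Pw.support), ∃ q : H.Walk u a2, q.toSubgraph ≤ K2 := by
    intro u hu
    refine ⟨(Pw.takeUntil u hu).reverse, ?_⟩
    rw [Walk.toSubgraph_reverse]
    refine le_trans ?_ hPle
    have hspec := Pw.take_spec hu
    calc (Pw.takeUntil u hu).toSubgraph
        ≤ (Pw.takeUntil u hu).toSubgraph ⊔ (Pw.dropUntil u hu).toSubgraph := le_sup_left
      _ = ((Pw.takeUntil u hu).append (Pw.dropUntil u hu)).toSubgraph :=
          (Walk.toSubgraph_append _ _).symm
      _ = Pw.toSubgraph := by rw [hspec]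
  have hnc : ∀ {u v : V} (p : H.Walk u v), u ∉ C → v ∈ Pw.support →
      ∃ q : H.Walk u a2, q.toSubgraph ≤ K2 := by
    intro u v p
    induction p with
    | nil =>
      intro _ hv
      exact hsup _ hv
    | @cons x y z h q ih =>
      intro hx hz
      by_cases he : s(x, y) ∈ Pw.edges
      · exact hsup x (Walk.fst_mem_support_of_mem_edges Pw he)
      · have hy : y ∉ C := fun hyc => hx ((hCadj ((hH'adj x y).mpr ⟨h, he⟩)).mpr hyc)
        obtain ⟨q', hq'⟩ := ih hy hz
        refine ⟨Walk.cons h q', ?_⟩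
        simp only [Walk.toSubgraph]
        exact sup_le (SimpleGraph.subgraphOfAdj_le_of_adj K2 ⟨h, Or.inr hx⟩) hq'
  have hto2 : ∀ u, u ∈ K2.verts → ∃ q : H.Walk u a2, q.toSubgraph ≤ K2 := by
    intro u hu
    rcases hu with hu | hu
    · obtain ⟨p⟩ := hconn.preconnected u a2
      exact hnc p hu Pw.start_mem_support
    · exact hsup u hu
  have hK2conn : K2.Connected := by
    rw [Subgraph.connected_iff_forall_exists_walk_subgraph]
    refine ⟨⟨a2, ha2K2⟩, ?_⟩
    intro u v hu hv
    obtain ⟨q1, hq1⟩ := hto2 u hu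
    obtain ⟨q2, hq2⟩ := hto2 v hv
    refine ⟨q1.append q2.reverse, ?_⟩
    rw [Walk.toSubgraph_append, Walk.toSubgraph_reverse]
    exact sup_le hq1 hq2
  -- edge set facts
  have hdisjE : Disjoint K1.edgeSet K2.edgeSet := by
    rw [Set.disjoint_left]
    intro e
    induction e using Sym2.ind with
    | _ x y =>
      intro h1 h2
      rw [Subgraph.mem_edgeSet] at h1 h2
      obtain ⟨hadj, hxC⟩ := h1
      have hne : s(x, y) ∉ Pw.edges := ((hH'adj x y).mp hadj).2
      rcases h2.2 with he | hnc
      · exact hne he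
      · exact hnc hxC
  have hunionE : K1.edgeSet ∪ K2.edgeSet = H.edgeSet := by
    apply Set.eq_of_subset_of_subset
    · rintro e (he | he)
      · exact K1.edgeSet_subset he
      · exact K2.edgeSet_subset he
    · intro e
      induction e using Sym2.ind with
      | _ x y =>
        intro hadj
        rw [SimpleGraph.mem_edgeSet] at hadj
        by_cases he : s(x, y) ∈ Pw.edges
        · exact Or.inr ((Subgraph.mem_edgeSet).mpr ⟨hadj, Or.inl he⟩)
        · by_cases hx : x ∈ C
          · exact Or.inl ((Subgraph.mem_edgeSet).mpr ⟨(hH'adj x y).mpr ⟨hadj, he⟩, hx⟩)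
          · exact Or.inr ((Subgraph.mem_edgeSet).mpr ⟨hadj, Or.inr hx⟩)
  -- parity of edge counts
  have hs1 : ∀ v, v ∈ V1.toFinset ↔ v ∈ V1 := fun v => Set.mem_toFinset
  have hoddE1 : Odd K1.edgeSet.ncard := by
    rw [bip_edge_count hdisj hbip K1 V1.toFinset hs1, odd_sum_iff_card]
    have hfilt : (V1.toFinset.filter fun v => Odd ((K1.neighborSet v).ncard)) = {a1} := by
      ext v
      simp only [Finset.mem_filter, Finset.mem_singleton, hs1, hK1odd']
      constructor
      · rintro ⟨hv, rfl | rfl⟩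
        · rfl
        · exact absurd (Set.disjoint_left.mp hdisj hv ha3) (fun h => h)
      · rintro rfl
        exact ⟨ha1, Or.inl rfl⟩
    rw [hfilt]
    simp
  have hoddE2 : Odd K2.edgeSet.ncard := by
    rw [bip_edge_count hdisj hbip K2 V1.toFinset hs1, odd_sum_iff_card]
    have hfilt : (V1.toFinset.filter fun v => Odd ((K2.neighborSet v).ncard)) = {a2} := by
      ext v
      simp only [Finset.mem_filter, Finset.mem_singleton, hs1, hK2odd]
      constructor
      · rintro ⟨hv, rfl | rfl⟩
        · rfl
        · exact absurd (Set.disjoint_left.mp hdisj hv ha4) (fun h => h)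
      · rintro rfl
        exact ⟨ha2, Or.inl rfl⟩
    rw [hfilt]
    simp
  -- assemble
  refine ⟨K1, K2, ⟨hK1conn, ha1C, ha3C, fun w _ => ?_⟩,
    ⟨hK2conn, ha2K2, ha4K2, fun w _ => ?_⟩, hoddE1, hoddE2, hdisjE, hunionE⟩
  · rw [hK1odd' w]
    exact (and_iff_left h13).symm
  · rw [hK2odd w]
    exact (and_iff_left h24).symm
end
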